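/- arXiv:2003.07128 — 7 statements merged into one kernel-verified Lean document; each statement's English description precedes it below -/
import Mathlib

section
/- Let α ∈ (0,1) and let k be a nonzero integer. Then Φ_{α,k} is square integrable on (0,∞) and ∫₀^∞ Φ_{α,k}(x)² dx = π · (1+α)^{(1−α)/(1+α)} · Γ((1−α)/(1+α)) · (2|k|)^{−2/(1+α)}, where Γ denotes the Euler Gamma function. -/
open MeasureTheory

/-- The function `Φ_{α,k}(x) = √(π(1+α)/(2|k|)) · x^{−α/2} · exp(−|k|x^{1+α}/(1+α))`. -/
noncomputable def PhiG (α : ℝ) (k : ℤ) (x : ℝ) : ℝ :=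
  Real.sqrt (Real.pi * (1 + α) / (2 * |(k : ℝ)|)) * x ^ (-(α / 2)) *
    Real.exp (-(|(k : ℝ)| * x ^ (1 + α) / (1 + α)))

/-- For `α ∈ (0,1)` and a nonzero integer `k`, the function `Φ_{α,k}` is
square integrable on `(0,∞)` and
`∫₀^∞ Φ_{α,k}(x)² dx = π·(1+α)^{(1−α)/(1+α)}·Γ((1−α)/(1+α))·(2|k|)^{−2/(1+α)}`. -/
theorem PhiG_norm_squared (α : ℝ) (hα0 : 0 < α) (hα1 : α < 1) (k : ℤ) (hk : k ≠ 0) :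
    IntegrableOn (fun x : ℝ => PhiG α k x ^ 2) (Set.Ioi 0) ∧
    ∫ x in Set.Ioi (0 : ℝ), PhiG α k x ^ 2 =
      Real.pi * (1 + α) ^ ((1 - α) / (1 + α)) * Real.Gamma ((1 - α) / (1 + α)) *
        (2 * |(k : ℝ)|) ^ (-(2 / (1 + α))) := by
  have hkpos : (0 : ℝ) < |(k : ℝ)| := by
    simp [abs_pos, Int.cast_ne_zero, hk]
  have hα : (0 : ℝ) < 1 + α := by linarith
  set C : ℝ := Real.pi * (1 + α) / (2 * |(k : ℝ)|) with hC
  have hCpos : 0 < C := by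
    apply div_pos (mul_pos Real.pi_pos hα) (by linarith)
  set b : ℝ := 2 * |(k : ℝ)| / (1 + α) with hb
  have hbpos : 0 < b := div_pos (by linarith) hα
  have hq : (-1 : ℝ) < -α := by linarith
  have key : ∀ x ∈ Set.Ioi (0 : ℝ),
      PhiG α k x ^ 2 = C * (x ^ (-α) * Real.exp (-b * x ^ (1 + α))) := by
    intro x hx
    have hx0 : (0 : ℝ) < x := hx
    unfold PhiG
    rw [mul_pow, mul_pow, Real.sq_sqrt hCpos.le, ← Real.exp_nat_mul,
      ← Real.rpow_natCast (x ^ (-(α/2))) 2, ← Real.rpow_mul hx0.le]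
    ring_nf
    rw [hb]; ring_nf
  rw [setIntegral_congr_fun measurableSet_Ioi key]
  constructor
  · refine (IntegrableOn.congr_fun ?_ (fun x hx => (key x hx).symm) measurableSet_Ioi)
    exact (integrableOn_rpow_mul_exp_neg_mul_rpow hq (by linarith) hbpos).const_mul C
  · rw [MeasureTheory.integral_const_mul,
      integral_rpow_mul_exp_neg_mul_rpow hα hq hbpos]
    have hbrw : b ^ (-(-α + 1) / (1 + α)) =
        (2 * |(k : ℝ)|) ^ (-(-α + 1) / (1 + α)) * ((1 + α) ^ (-(-α + 1) / (1 + α)))⁻¹ := by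
      rw [hb, Real.div_rpow (by linarith) hα.le, div_eq_mul_inv]
    rw [hbrw, hC]
    have h1 : ((1 + α) ^ (-(-α + 1) / (1 + α)))⁻¹ = (1 + α) ^ ((-α + 1) / (1 + α)) := by
      rw [← Real.rpow_neg hα.le]; ring_nf
    rw [h1]
    have h2 : Real.pi * (1 + α) / (2 * |(k : ℝ)|) *
        ((2 * |(k : ℝ)|) ^ (-(-α + 1) / (1 + α)) * (1 + α) ^ ((-α + 1) / (1 + α)) * (1 / (1 + α)) *
          Real.Gamma ((-α + 1) / (1 + α))) =
        Real.pi * (1 + α) ^ ((-α + 1) / (1 + α)) * Real.Gamma ((-α + 1) / (1 + α)) *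
          ((2 * |(k : ℝ)|) ^ (-(-α + 1) / (1 + α)) / (2 * |(k : ℝ)|)) := by
      field_simp
    rw [h2]
    have h3 : (2 * |(k : ℝ)|) ^ (-(-α + 1) / (1 + α)) / (2 * |(k : ℝ)|) =
        (2 * |(k : ℝ)|) ^ (-(2 / (1 + α))) := by
      rw [div_eq_mul_inv, ← Real.rpow_neg_one (2 * |(k : ℝ)|),
        ← Real.rpow_add (by linarith)]
      congr 1
      field_simp
      ring
    rw [h3]
    congr 2 <;> ring_nf
end

section
/- Let α ∈ (0,1) and let k be a nonzero integer. If u : (0,∞) → ℂ is twice differentiable, satisfies −u''(x) + (k²x^{2α} + α(2+α)/(4x²))·u(x) = 0 for every x > 0, and is square integrable on (0,∞), then there exists a constant c ∈ ℂ such that u(x) = c·Φ_{α,k}(x) for all x > 0. (This expresses that the kernel of the adjoint A_α(k)* is the one-dimensional span of Φ_{α,k}.) -/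
open MeasureTheory

set_option maxHeartbeats 1600000

lemma PhiG_pos {α : ℝ} (hα0 : 0 < α) {k : ℤ} (hk : k ≠ 0) {x : ℝ} (hx : 0 < x) :
    0 < PhiG α k x := by
  have hkp : (0:ℝ) < |(k:ℝ)| := by
    simp only [abs_pos, ne_eq, Int.cast_eq_zero]; exact hk
  have : 0 < Real.pi * (1 + α) / (2 * |(k : ℝ)|) := by positivity
  unfold PhiG
  positivity

lemma hasDerivAt_PhiG {α : ℝ} (hα0 : 0 < α) (k : ℤ) {x : ℝ} (hx : 0 < x) :
    HasDerivAt (PhiG α k)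
      ((-(α / 2) * x⁻¹ - |(k : ℝ)| * x ^ α) * PhiG α k x) x := by
  have hq : (1:ℝ) + α ≠ 0 := by linarith
  have h1 : HasDerivAt (fun y : ℝ => y ^ (-(α/2))) (-(α/2) * x ^ (-(α/2) - 1)) x :=
    Real.hasDerivAt_rpow_const (Or.inl hx.ne')
  have h2 : HasDerivAt (fun y : ℝ => y ^ ((1:ℝ)+α)) (((1:ℝ)+α) * x ^ ((1:ℝ)+α-1)) x :=
    Real.hasDerivAt_rpow_const (Or.inl hx.ne')
  have h4 := (((h2.const_mul (|(k:ℝ)|)).div_const ((1:ℝ)+α)).neg).exp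
  have h5 := (h1.const_mul (Real.sqrt (Real.pi * (1 + α) / (2 * |(k : ℝ)|)))).mul h4
  have hfun : PhiG α k = fun y : ℝ =>
      Real.sqrt (Real.pi * (1 + α) / (2 * |(k : ℝ)|)) * y ^ (-(α / 2)) *
        Real.exp (-(|(k : ℝ)| * y ^ (1 + α) / (1 + α))) := rfl
  rw [hfun]
  beta_reduce
  refine h5.congr_deriv ?_
  have e1 : x ^ (-(α/2) - 1) = x ^ (-(α/2)) / x := by
    rw [Real.rpow_sub hx, Real.rpow_one]
  have e2 : x ^ ((1:ℝ)+α-1) = x ^ α := by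
    rw [show (1:ℝ)+α-1 = α by ring]
  rw [e1, e2]
  generalize Real.sqrt (Real.pi * (1 + α) / (2 * |(k : ℝ)|)) = S
  generalize Real.exp (-(|(k : ℝ)| * x ^ ((1:ℝ) + α) / (1 + α))) = E
  generalize x ^ (-(α/2)) = P
  generalize |(k:ℝ)| = K
  field_simp
  ring

lemma hasDerivAt_PhiG' {α : ℝ} (hα0 : 0 < α) (k : ℤ) {x : ℝ} (hx : 0 < x) :
    HasDerivAt (fun y : ℝ => (-(α / 2) * y⁻¹ - |(k : ℝ)| * y ^ α) * PhiG α k y)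
      (((k : ℝ) ^ 2 * x ^ (2 * α) + α * (2 + α) / (4 * x ^ 2)) * PhiG α k x) x := by
  have ha : HasDerivAt (fun y : ℝ => -(α/2) * y⁻¹) (-(α/2) * (-(x^2)⁻¹)) x :=
    (hasDerivAt_inv hx.ne').const_mul (-(α/2))
  have hb : HasDerivAt (fun y : ℝ => |(k:ℝ)| * y ^ α) (|(k:ℝ)| * (α * x ^ (α-1))) x :=
    (Real.hasDerivAt_rpow_const (Or.inl hx.ne')).const_mul _
  have hh := (ha.sub hb).mul (hasDerivAt_PhiG hα0 k hx)
  refine hh.congr_deriv ?_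
  simp only [Pi.sub_apply]
  have e1 : x ^ (α - 1) = x ^ α / x := by rw [Real.rpow_sub hx, Real.rpow_one]
  have e2 : x ^ (2 * α) = x ^ α * x ^ α := by
    rw [show 2*α = α + α by ring, Real.rpow_add hx]
  rw [e1, e2, ← sq_abs ((k:ℝ))]
  generalize PhiG α k x = P
  generalize |(k:ℝ)| = K
  generalize hxA : x ^ α = A
  field_simp
  ring

lemma const_on_Ioi {F : ℝ → ℂ} (h : ∀ x ∈ Set.Ioi (0:ℝ), HasDerivAt F 0 x) {x y : ℝ}
    (hx : 0 < x) (hy : 0 < y) : F x = F y := by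
  refine (convex_Ioi (0:ℝ)).is_const_of_fderivWithin_eq_zero
    (fun z hz => (h z hz).differentiableAt.differentiableWithinAt) (fun z hz => ?_) hx hy
  rw [fderivWithin_of_isOpen isOpen_Ioi hz, (h z hz).hasFDerivAt.fderiv]
  ext v
  simp

lemma PhiG_sq_inv {α : ℝ} (hα0 : 0 < α) {k : ℤ} (hk : k ≠ 0) {t : ℝ} (ht : 0 < t) :
    ((PhiG α k t)^2)⁻¹ = (Real.sqrt (Real.pi * (1 + α) / (2 * |(k : ℝ)|))^2)⁻¹ *
      (t ^ α * Real.exp (2 * (|(k:ℝ)| * t^(1+α)/(1+α)))) := by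
  have h1 : (t ^ (-(α/2)))^2 = (t ^ α)⁻¹ := by
    rw [← Real.rpow_natCast (t ^ (-(α/2))) 2, ← Real.rpow_mul ht.le]
    norm_num
    rw [Real.rpow_neg ht.le]
  have h2 : (Real.exp (-(|(k:ℝ)| * t^(1+α)/(1+α))))^2
      = (Real.exp (2 * (|(k:ℝ)| * t^(1+α)/(1+α))))⁻¹ := by
    rw [sq, ← Real.exp_add, ← Real.exp_neg]
    ring_nf
  unfold PhiG
  rw [mul_pow, mul_pow, h1, h2]
  have hta : (0:ℝ) < t ^ α := Real.rpow_pos_of_pos ht α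
  have hex : (0:ℝ) < Real.exp (2 * (|(k:ℝ)| * t^(1+α)/(1+α))) := Real.exp_pos _
  field_simp

/-- For `α ∈ (0,1)` and a nonzero integer `k`: any twice differentiable
`u : (0,∞) → ℂ` solving `−u'' + (k²x^{2α} + α(2+α)/(4x²))u = 0` on `(0,∞)` which is square
integrable on `(0,∞)` is a constant multiple of `Φ_{α,k}` (the kernel of `A_α(k)*` is the
one-dimensional span of `Φ_{α,k}`). -/
theorem kernel_adjoint_spanned_by_PhiG (α : ℝ) (hα0 : 0 < α) (hα1 : α < 1)
    (k : ℤ) (hk : k ≠ 0) (u : ℝ → ℂ)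
    (hu1 : ∀ x : ℝ, 0 < x → DifferentiableAt ℝ u x)
    (hu2 : ∀ x : ℝ, 0 < x → DifferentiableAt ℝ (deriv u) x)
    (hODE : ∀ x : ℝ, 0 < x →
      -(deriv (deriv u) x) +
        (((k : ℝ) ^ 2 * x ^ (2 * α) + α * (2 + α) / (4 * x ^ 2) : ℝ) : ℂ) * u x = 0)
    (hL2 : IntegrableOn (fun x : ℝ => ‖u x‖ ^ 2) (Set.Ioi 0)) :
    ∃ c : ℂ, ∀ x : ℝ, 0 < x → u x = c * (PhiG α k x : ℂ) := by
  -- notation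
  have hφpos : ∀ x : ℝ, 0 < x → 0 < PhiG α k x := fun x hx => PhiG_pos hα0 hk hx
  have hφne : ∀ x : ℝ, 0 < x → ((PhiG α k x : ℂ)) ≠ 0 := by
    intro x hx
    exact_mod_cast (hφpos x hx).ne'
  -- the second derivative of u
  have hu'' : ∀ x : ℝ, 0 < x → deriv (deriv u) x =
      (((k : ℝ) ^ 2 * x ^ (2 * α) + α * (2 + α) / (4 * x ^ 2) : ℝ) : ℂ) * u x := by
    intro x hx
    have h := hODE x hx
    linear_combination -h
  -- Wronskian
  set W : ℝ → ℂ := fun y => deriv u y * ((PhiG α k y : ℝ) : ℂ)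
      - u y * (((-(α / 2) * y⁻¹ - |(k : ℝ)| * y ^ α) * PhiG α k y : ℝ) : ℂ) with hWdef
  have hWd : ∀ x ∈ Set.Ioi (0:ℝ), HasDerivAt W 0 x := by
    intro x hx
    rw [Set.mem_Ioi] at hx
    have hφd := (hasDerivAt_PhiG hα0 k hx).ofReal_comp
    have hφdd := (hasDerivAt_PhiG' hα0 k hx).ofReal_comp
    have h := (((hu2 x hx).hasDerivAt.mul hφd).sub ((hu1 x hx).hasDerivAt.mul hφdd))
    refine h.congr_deriv ?_
    rw [hu'' x hx]
    push_cast
    ring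
  have hWc : ∀ x : ℝ, 0 < x → W x = W 1 := fun x hx => const_on_Ioi hWd hx one_pos
  set c₀ : ℂ := W 1 with hc₀def
  -- derivative of v = u / φ
  set v : ℝ → ℂ := fun y => u y / ((PhiG α k y : ℝ) : ℂ) with hvdef
  have hvd : ∀ x : ℝ, 0 < x → HasDerivAt v (c₀ * (((PhiG α k x)^2)⁻¹ : ℝ)) x := by
    intro x hx
    have hφd := (hasDerivAt_PhiG hα0 k hx).ofReal_comp
    have h := (hu1 x hx).hasDerivAt.div hφd (hφne x hx)
    refine h.congr_deriv ?_
    rw [show (deriv u x * ↑(PhiG α k x) -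
        u x * ↑((-(α / 2) * x⁻¹ - |(k : ℝ)| * x ^ α) * PhiG α k x)) = W x from rfl,
      hWc x hx]
    push_cast
    ring
  by_cases hc : c₀ = 0
  · -- v is constant
    refine ⟨v 1, fun x hx => ?_⟩
    have : v x = v 1 := by
      refine const_on_Ioi (fun z hz => ?_) hx one_pos
      rw [Set.mem_Ioi] at hz
      simpa [hc] using hvd z hz
    rw [← this, hvdef]
    beta_reduce
    rw [div_mul_cancel₀ _ (hφne x hx)]
  · exfalso
    -- the integral I
    set f : ℝ → ℝ := fun t => ((PhiG α k t)^2)⁻¹ with hfdef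
    have hfc : ∀ t : ℝ, 0 < t → ContinuousAt f t := by
      intro t ht
      exact (((hasDerivAt_PhiG hα0 k ht).continuousAt.pow 2).inv₀
        (pow_ne_zero 2 (hφpos t ht).ne'))
    have hfnn : ∀ t : ℝ, 0 ≤ f t := fun t => by positivity
    have hfint : ∀ a c : ℝ, 0 < a → 0 < c → IntervalIntegrable f volume a c := by
      intro a c ha hc'
      apply ContinuousOn.intervalIntegrable
      intro t ht
      have : 0 < t := lt_of_lt_of_le (lt_min ha hc') ht.1
      exact (hfc t this).continuousWithinAt
    set I : ℝ → ℝ := fun x => ∫ t in (1:ℝ)..x, f t with hIdef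
    have hId : ∀ x : ℝ, 0 < x → HasDerivAt I (f x) x := by
      intro x hx
      exact intervalIntegral.integral_hasDerivAt_right (hfint 1 x one_pos hx)
        (ContinuousAt.stronglyMeasurableAtFilter isOpen_Ioi (fun t ht => hfc t ht) x hx)
        (hfc x hx)
    -- v x = v 1 + c₀ * I x
    have hvI : ∀ x : ℝ, 0 < x → v x = v 1 + c₀ * (I x : ℂ) := by
      intro x hx
      have hD : ∀ z ∈ Set.Ioi (0:ℝ),
          HasDerivAt (fun y => v y - c₀ * ((I y : ℝ) : ℂ)) 0 z := by
        intro z hz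
        rw [Set.mem_Ioi] at hz
        have h := (hvd z hz).sub (((hId z hz).ofReal_comp).const_mul c₀)
        refine h.congr_deriv ?_
        ring
      have h1 := const_on_Ioi hD hx one_pos
      have hI1 : I 1 = 0 := intervalIntegral.integral_same
      rw [hI1] at h1
      push_cast at h1
      rw [mul_zero, sub_zero] at h1
      linear_combination h1
    -- quantitative growth
    have hq0 : (0:ℝ) < 1 + α := by linarith
    have hb1 : (1:ℝ) ≤ |(k:ℝ)| := by
      rw [← Int.cast_abs]
      exact_mod_cast Int.one_le_abs hk
    have hb0 : (0:ℝ) ≤ |(k:ℝ)| := by linarith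
    set C : ℝ := Real.sqrt (Real.pi * (1 + α) / (2 * |(k : ℝ)|)) with hCdef
    have hC : 0 < C := by
      rw [hCdef]
      have hkp : (0:ℝ) < |(k:ℝ)| := by linarith
      have : 0 < Real.pi * (1 + α) / (2 * |(k : ℝ)|) := by positivity
      positivity
    set K : ℝ := (2:ℝ)^(-α) * C⁻¹ * Real.exp (-(2*|(k:ℝ)|)) / 2 with hKdef
    have hK : 0 < K := by
      rw [hKdef]
      have h2 : (0:ℝ) < (2:ℝ)^(-α) := Real.rpow_pos_of_pos two_pos _
      positivity
    -- key growth estimate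
    have key : ∀ x : ℝ, 2 ≤ x → K * x ^ ((1:ℝ)/2) ≤ PhiG α k x * I x := by
      intro x hx2
      have hx0 : (0:ℝ) < x := by linarith
      have hx1 : (1:ℝ) ≤ x := by linarith
      have hδ0 : 0 < x ^ (-α) := Real.rpow_pos_of_pos hx0 _
      have hδ1 : x ^ (-α) ≤ 1 := Real.rpow_le_one_of_one_le_of_nonpos hx1 (by linarith)
      set a : ℝ := x - x ^ (-α) with hadef
      have ha1 : 1 ≤ a := by rw [hadef]; linarith
      have ha0 : 0 < a := by linarith
      have hax : a < x := by rw [hadef]; linarith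
      -- mean value theorem for t ^ (1+α)
      obtain ⟨ξ, hξ, hsl⟩ := exists_hasDerivAt_eq_slope (fun t : ℝ => t ^ ((1:ℝ)+α))
        (fun t : ℝ => ((1:ℝ)+α) * t ^ ((1:ℝ)+α-1)) hax
        (fun t ht => (Real.hasDerivAt_rpow_const
          (Or.inl (lt_of_lt_of_le ha0 ht.1).ne')).continuousAt.continuousWithinAt)
        (fun t ht => Real.hasDerivAt_rpow_const (Or.inl (lt_of_lt_of_le ha0 ht.1.le).ne'))
      have hξ0 : 0 < ξ := lt_trans ha0 hξ.1
      rw [eq_div_iff (by linarith : x - a ≠ 0)] at hsl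
      have hξx : ξ ^ ((1:ℝ)+α-1) ≤ x ^ ((1:ℝ)+α-1) := by
        apply Real.rpow_le_rpow hξ0.le hξ.2.le (by linarith)
      have hpow1 : x ^ ((1:ℝ)+α-1) * x ^ (-α) = 1 := by
        rw [← Real.rpow_add hx0, show (1:ℝ)+α-1 + -α = 0 by ring, Real.rpow_zero]
      have hgap : x ^ ((1:ℝ)+α) - a ^ ((1:ℝ)+α) ≤ (1+α) := by
        have hxa : x - a = x ^ (-α) := by rw [hadef]; ring
        rw [hxa] at hsl
        have h2 : ((1:ℝ)+α) * ξ ^ ((1:ℝ)+α-1) * x ^ (-α)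
            ≤ ((1:ℝ)+α) * x ^ ((1:ℝ)+α-1) * x ^ (-α) := by
          have := mul_le_mul_of_nonneg_left hξx (le_of_lt hq0)
          exact mul_le_mul_of_nonneg_right this hδ0.le
        have h2' : ((1:ℝ)+α) * ξ ^ ((1:ℝ)+α-1) * x ^ (-α) ≤ 1 + α := by
          calc ((1:ℝ)+α) * ξ ^ ((1:ℝ)+α-1) * x ^ (-α)
              ≤ ((1:ℝ)+α) * x ^ ((1:ℝ)+α-1) * x ^ (-α) := h2
            _ = ((1:ℝ)+α) * (x ^ ((1:ℝ)+α-1) * x ^ (-α)) := by ring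
            _ = 1 + α := by rw [hpow1, mul_one]
        linarith [hsl, h2']
      -- the exponent comparison
      have hga : |(k:ℝ)| * x ^ ((1:ℝ)+α) / (1+α) - |(k:ℝ)|
          ≤ |(k:ℝ)| * a ^ ((1:ℝ)+α) / (1+α) := by
        have h2 := mul_le_mul_of_nonneg_left hgap hb0
        rw [div_sub' hq0.ne', div_le_div_iff₀ hq0 hq0]
        nlinarith [h2]
      -- lower bound for f on [a, x]
      set m : ℝ := (C^2)⁻¹ * ((x/2)^α *
        Real.exp (2*(|(k:ℝ)| * x ^ ((1:ℝ)+α) / (1+α) - |(k:ℝ)|))) with hmdef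
      have hmle : ∀ t ∈ Set.Icc a x, m ≤ f t := by
        intro t ht
        have ht0 : 0 < t := lt_of_lt_of_le ha0 ht.1
        have hft : f t = (C^2)⁻¹ * (t ^ α * Real.exp (2 * (|(k:ℝ)| * t^(1+α)/(1+α)))) := by
          rw [hfdef]
          exact PhiG_sq_inv hα0 hk ht0
        rw [hft, hmdef]
        have ht2 : x/2 ≤ t := by
          have := ht.1
          rw [hadef] at this
          linarith
        have hp1 : (x/2)^α ≤ t^α := Real.rpow_le_rpow (by linarith) ht2 hα0.le
        have haq : a ^ ((1:ℝ)+α) ≤ t ^ ((1:ℝ)+α) :=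
          Real.rpow_le_rpow ha0.le ht.1 (by linarith)
        have hp2 : Real.exp (2*(|(k:ℝ)| * x ^ ((1:ℝ)+α) / (1+α) - |(k:ℝ)|))
            ≤ Real.exp (2 * (|(k:ℝ)| * t^(1+α)/(1+α))) := by
          apply Real.exp_le_exp.2
          have h3 : |(k:ℝ)| * a ^ ((1:ℝ)+α) / (1+α) ≤ |(k:ℝ)| * t ^ ((1:ℝ)+α) / (1+α) := by
            gcongr
          linarith [hga]
        have h5 : 0 ≤ (x/2)^α := by positivity
        have h6 : (0:ℝ) < (C^2)⁻¹ := by positivity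
        have := mul_le_mul hp1 hp2 (Real.exp_pos _).le (by positivity)
        nlinarith [this]
      -- lower bound for the integral
      have hIlow : x ^ (-α) * m ≤ I x := by
        have hint1 := hfint 1 a one_pos ha0
        have hint2 := hfint a x ha0 hx0
        have hsplit : I x = (∫ t in (1:ℝ)..a, f t) + ∫ t in a..x, f t := by
          rw [hIdef]
          exact (intervalIntegral.integral_add_adjacent_intervals hint1 hint2).symm
        have h01 : 0 ≤ ∫ t in (1:ℝ)..a, f t :=
          intervalIntegral.integral_nonneg ha1 (fun t _ => hfnn t)
        have h02 : x ^ (-α) * m ≤ ∫ t in a..x, f t := by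
          have hmono := intervalIntegral.integral_mono_on (f := fun _ => m) hax.le
            intervalIntegrable_const hint2 hmle
          rwa [intervalIntegral.integral_const, smul_eq_mul,
            show x - a = x ^ (-α) by rw [hadef]; ring] at hmono
        rw [hsplit]
        linarith [h01, h02]
      -- compute the product lower bound
      have hXa : x ^ (-α) * (x/2) ^ α = (2:ℝ)^(-α) := by
        rw [Real.div_rpow hx0.le (by norm_num : (0:ℝ) ≤ 2), Real.rpow_neg hx0.le,
          Real.rpow_neg (by norm_num : (0:ℝ) ≤ 2)]
        have : x ^ α ≠ 0 := (Real.rpow_pos_of_pos hx0 α).ne'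
        field_simp
      have hE : Real.exp (-(|(k:ℝ)| * x ^ (1+α) / (1+α)))
            * Real.exp (2*(|(k:ℝ)| * x ^ ((1:ℝ)+α) / (1+α) - |(k:ℝ)|))
          = Real.exp (-(2*|(k:ℝ)|)) * Real.exp (|(k:ℝ)| * x ^ ((1:ℝ)+α) / (1+α)) := by
        rw [← Real.exp_add, ← Real.exp_add]
        ring_nf
      have hCC : C * C⁻¹ = 1 := mul_inv_cancel₀ hC.ne'
      have hprod : PhiG α k x * (x ^ (-α) * m)
          = (2:ℝ)^(-α) * C⁻¹ * Real.exp (-(2*|(k:ℝ)|))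
            * (x ^ (-(α/2)) * Real.exp (|(k:ℝ)| * x ^ ((1:ℝ)+α) / (1+α))) := by
        unfold PhiG
        rw [← hCdef, hmdef]
        have hC2 : (C^2)⁻¹ = C⁻¹ * C⁻¹ := by rw [sq, mul_inv]
        rw [hC2]
        calc C * x ^ (-(α / 2)) * Real.exp (-(|(k:ℝ)| * x ^ (1 + α) / (1 + α)))
              * (x ^ (-α) * (C⁻¹ * C⁻¹ * ((x/2)^α *
                Real.exp (2*(|(k:ℝ)| * x ^ ((1:ℝ)+α) / (1+α) - |(k:ℝ)|)))))
            = (C * C⁻¹) * C⁻¹ * (x ^ (-α) * (x/2)^α)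
              * (Real.exp (-(|(k:ℝ)| * x ^ (1 + α) / (1 + α)))
                * Real.exp (2*(|(k:ℝ)| * x ^ ((1:ℝ)+α) / (1+α) - |(k:ℝ)|)))
              * x ^ (-(α/2)) := by ring
          _ = (2:ℝ)^(-α) * C⁻¹ * Real.exp (-(2*|(k:ℝ)|))
              * (x ^ (-(α/2)) * Real.exp (|(k:ℝ)| * x ^ ((1:ℝ)+α) / (1+α))) := by
              rw [hCC, hXa, hE]; ring
      -- exponential beats polynomial
      have hg2 : x ^ ((1:ℝ)+α) / 2 ≤ |(k:ℝ)| * x ^ ((1:ℝ)+α) / (1+α) := by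
        have hxq : (0:ℝ) < x ^ ((1:ℝ)+α) := Real.rpow_pos_of_pos hx0 _
        rw [div_le_div_iff₀ two_pos hq0]
        nlinarith [hxq, hb1, hα1]
      have hge : x ^ ((1:ℝ)+α) / 2 ≤ Real.exp (|(k:ℝ)| * x ^ ((1:ℝ)+α) / (1+α)) := by
        have := Real.add_one_le_exp (|(k:ℝ)| * x ^ ((1:ℝ)+α) / (1+α))
        linarith
      have hxx : x ^ (-(α/2)) * (x ^ ((1:ℝ)+α) / 2) = x ^ (1+α/2) / 2 := by
        have h9 : x ^ ((1:ℝ)+α/2) = x ^ (-(α/2)) * x ^ ((1:ℝ)+α) := by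
          rw [← Real.rpow_add hx0, show -(α/2) + ((1:ℝ)+α) = (1:ℝ)+α/2 by ring]
        rw [show (1+α/2 : ℝ) = ((1:ℝ)+α/2) from rfl, h9, mul_div_assoc]
      have hfinal : x ^ ((1:ℝ)/2) / 2 ≤ x ^ (-(α/2)) * Real.exp (|(k:ℝ)| * x ^ ((1:ℝ)+α) / (1+α)) := by
        have hp0 : (0:ℝ) < x ^ (-(α/2)) := Real.rpow_pos_of_pos hx0 _
        have h1 := mul_le_mul_of_nonneg_left hge hp0.le
        rw [hxx] at h1
        have h2 : x ^ ((1:ℝ)/2) ≤ x ^ (1+α/2) :=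
          Real.rpow_le_rpow_of_exponent_le hx1 (by linarith)
        linarith
      -- assemble
      have hIx : x ^ (-α) * m ≤ I x := hIlow
      have hφx : 0 < PhiG α k x := hφpos x hx0
      have hstep := mul_le_mul_of_nonneg_left hIx hφx.le
      rw [hprod] at hstep
      have hA : (0:ℝ) < (2:ℝ)^(-α) * C⁻¹ * Real.exp (-(2*|(k:ℝ)|)) := by
        have h2 : (0:ℝ) < (2:ℝ)^(-α) := Real.rpow_pos_of_pos two_pos _
        positivity
      have h3 := mul_le_mul_of_nonneg_left hfinal hA.le
      calc K * x ^ ((1:ℝ)/2)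
          = (2:ℝ)^(-α) * C⁻¹ * Real.exp (-(2*|(k:ℝ)|)) * (x ^ ((1:ℝ)/2) / 2) := by
            rw [hKdef]; ring
        _ ≤ (2:ℝ)^(-α) * C⁻¹ * Real.exp (-(2*|(k:ℝ)|))
            * (x ^ (-(α/2)) * Real.exp (|(k:ℝ)| * x ^ ((1:ℝ)+α) / (1+α))) := h3
        _ ≤ PhiG α k x * I x := hstep
    -- PhiG is bounded by C on [1, ∞)
    have hφleC : ∀ x : ℝ, 1 ≤ x → PhiG α k x ≤ C := by
      intro x hx1
      have hx0 : (0:ℝ) < x := by linarith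
      have hP : x ^ (-(α/2)) ≤ 1 := Real.rpow_le_one_of_one_le_of_nonpos hx1 (by linarith)
      have hP0 : (0:ℝ) ≤ x ^ (-(α/2)) := (Real.rpow_pos_of_pos hx0 _).le
      have hEx : Real.exp (-(|(k:ℝ)| * x ^ (1+α) / (1+α))) ≤ 1 := by
        rw [Real.exp_le_one_iff]
        have : (0:ℝ) ≤ |(k:ℝ)| * x ^ (1+α) / (1+α) := by positivity
        linarith
      have hEx0 : (0:ℝ) ≤ Real.exp (-(|(k:ℝ)| * x ^ (1+α) / (1+α))) := (Real.exp_pos _).le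
      unfold PhiG
      rw [← hCdef]
      calc C * x ^ (-(α/2)) * Real.exp (-(|(k:ℝ)| * x ^ (1+α) / (1+α)))
          ≤ C * x ^ (-(α/2)) * 1 := by
            apply mul_le_mul_of_nonneg_left hEx (by positivity)
        _ = C * x ^ (-(α/2)) := mul_one _
        _ ≤ C * 1 := mul_le_mul_of_nonneg_left hP hC.le
        _ = C := mul_one _
    -- norm lower bound
    have hnorm : ∀ x : ℝ, 2 ≤ x →
        ‖c₀‖ * (K * x ^ ((1:ℝ)/2)) - ‖v 1‖ * C ≤ ‖u x‖ := by
      intro x hx2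
      have hx0 : (0:ℝ) < x := by linarith
      have hux : u x = v x * ((PhiG α k x : ℝ) : ℂ) := by
        rw [hvdef]
        beta_reduce
        rw [div_mul_cancel₀ _ (hφne x hx0)]
      have h1 : ‖u x‖ = ‖v x‖ * PhiG α k x := by
        rw [hux, norm_mul, Complex.norm_real, Real.norm_eq_abs,
          abs_of_pos (hφpos x hx0)]
      have h2 : ‖c₀‖ * I x - ‖v 1‖ ≤ ‖v x‖ := by
        have hvx := hvI x hx0
        have hd : v x - v 1 = c₀ * ((I x : ℝ) : ℂ) := by rw [hvx]; ring
        have h3 : ‖c₀ * ((I x : ℝ) : ℂ)‖ ≤ ‖v x‖ + ‖v 1‖ := by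
          rw [← hd]; exact norm_sub_le _ _
        have h4 : ‖c₀‖ * I x ≤ ‖c₀ * ((I x : ℝ) : ℂ)‖ := by
          rw [norm_mul, Complex.norm_real, Real.norm_eq_abs]
          exact mul_le_mul_of_nonneg_left (le_abs_self _) (norm_nonneg _)
        linarith
      have hφx := hφpos x hx0
      have h5 := mul_le_mul_of_nonneg_right h2 hφx.le
      have h6 := mul_le_mul_of_nonneg_left (key x hx2) (norm_nonneg c₀)
      have h7 := mul_le_mul_of_nonneg_left (hφleC x (by linarith)) (norm_nonneg (v 1))
      nlinarith [h1, h5, h6, h7, norm_nonneg (v 1), hφx]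
    -- choose X large and contradict integrability
    have hc0 : 0 < ‖c₀‖ := norm_pos_iff.2 hc
    set r : ℝ := (‖v 1‖ * C + 1) / (‖c₀‖ * K) with hrdef
    have hr0 : 0 ≤ r := by
      rw [hrdef]
      positivity
    set X : ℝ := max 4 (r^2) with hXdef
    have hX4 : (4:ℝ) ≤ X := le_max_left _ _
    have hone : ∀ x : ℝ, X ≤ x → (1:ℝ) ≤ ‖u x‖ ^ 2 := by
      intro x hxX
      have hx2 : (2:ℝ) ≤ x := by linarith
      have hsq : r ≤ x ^ ((1:ℝ)/2) := by
        have h1 : r^2 ≤ x := le_trans (le_max_right 4 (r^2)) hxX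
        have h2 := Real.rpow_le_rpow (by positivity) h1 (by norm_num : (0:ℝ) ≤ 1/2)
        rwa [← Real.rpow_natCast r 2, ← Real.rpow_mul hr0,
          show ((2:ℕ):ℝ) * (1/2) = 1 by norm_num, Real.rpow_one] at h2
      have h3 := hnorm x hx2
      have h4 : ‖c₀‖ * K * r = ‖v 1‖ * C + 1 := by
        rw [hrdef, mul_div_cancel₀ _ (by positivity : ‖c₀‖ * K ≠ 0)]
      have h5 : ‖c₀‖ * (K * r) ≤ ‖c₀‖ * (K * x ^ ((1:ℝ)/2)) := by
        have := mul_le_mul_of_nonneg_left hsq hK.le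
        exact mul_le_mul_of_nonneg_left this hc0.le
      have h6 : (1:ℝ) ≤ ‖u x‖ := by nlinarith [h3, h4, h5]
      nlinarith [h6]
    have hXpos : (0:ℝ) < X := by linarith
    have hint : IntegrableOn (fun x : ℝ => ‖u x‖ ^ 2) (Set.Ioi X) :=
      hL2.mono_set (Set.Ioi_subset_Ioi hXpos.le)
    have hlt := hint.measure_ge_lt_top one_pos
    have hsub : Set.Ioi X ⊆ {a : ℝ | 1 ≤ ‖u a‖ ^ 2} := fun a ha => hone a (le_of_lt ha)
    have htop : (volume.restrict (Set.Ioi X)) {a : ℝ | 1 ≤ ‖u a‖ ^ 2} = ⊤ := by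
      have h1 : (volume.restrict (Set.Ioi X)) (Set.Ioi X)
          ≤ (volume.restrict (Set.Ioi X)) {a : ℝ | 1 ≤ ‖u a‖ ^ 2} := measure_mono hsub
      rw [Measure.restrict_apply_self, Real.volume_Ioi] at h1
      exact top_le_iff.1 h1
    rw [htop] at hlt
    exact absurd hlt (by simp)
end

section
/- Let α ∈ (0,1) and let k be a nonzero integer. Then the Wronskian of Φ_{α,k} and F_{α,k} is constant and equals 1+α: for every x > 0, Φ_{α,k}(x)·F_{α,k}'(x) − Φ_{α,k}'(x)·F_{α,k}(x) = 1+α. -/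
/-- The function `F_{α,k}(x) = √(2(1+α)/(π|k|)) · x^{−α/2} · sinh(|k|x^{1+α}/(1+α))`. -/
noncomputable def FG (α : ℝ) (k : ℤ) (x : ℝ) : ℝ :=
  Real.sqrt (2 * (1 + α) / (Real.pi * |(k : ℝ)|)) * x ^ (-(α / 2)) *
    Real.sinh (|(k : ℝ)| * x ^ (1 + α) / (1 + α))

/-- For `α ∈ (0,1)` and a nonzero integer `k`, the Wronskian of `Φ_{α,k}`
and `F_{α,k}` is constant and equals `1+α`. -/
theorem wronskian_PhiG_FG (α : ℝ) (hα0 : 0 < α) (hα1 : α < 1) (k : ℤ) (hk : k ≠ 0) :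
    ∀ x : ℝ, 0 < x →
      PhiG α k x * deriv (FG α k) x - deriv (PhiG α k) x * FG α k x = 1 + α := by
  intro x hx
  set c : ℝ := |(k : ℝ)| with hc
  have hc0 : 0 < c := abs_pos.mpr (by exact_mod_cast hk)
  have hα : (0:ℝ) < 1 + α := by linarith
  have hxne : x ≠ 0 := ne_of_gt hx
  set A : ℝ := Real.sqrt (Real.pi * (1 + α) / (2 * c)) with hA
  set B : ℝ := Real.sqrt (2 * (1 + α) / (Real.pi * c)) with hB
  -- derivative of the power part
  have hg : HasDerivAt (fun y : ℝ => y ^ (-(α/2))) (-(α/2) * x ^ (-(α/2) - 1)) x :=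
    Real.hasDerivAt_rpow_const (Or.inl hxne)
  -- derivative of u(y) = c y^(1+α)/(1+α)
  have hu : HasDerivAt (fun y : ℝ => c * y ^ (1+α) / (1+α)) (c * x ^ α) x := by
    have h1 : HasDerivAt (fun y : ℝ => y ^ (1+α)) ((1+α) * x ^ (1+α-1)) x :=
      Real.hasDerivAt_rpow_const (Or.inl hxne)
    have h2 := (h1.const_mul c).div_const (1+α)
    have h3 : (1:ℝ) + α - 1 = α := by ring
    rw [h3] at h2
    rw [show c * ((1+α) * x ^ α) / (1+α) = c * x ^ α by rw [mul_div_assoc, mul_div_cancel_left₀ _ hα.ne']] at h2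
    exact h2
  -- derivative of FG
  have hF : HasDerivAt (FG α k)
      (B * (-(α/2) * x ^ (-(α/2) - 1)) * Real.sinh (c * x ^ (1+α)/(1+α))
        + B * x ^ (-(α/2)) * (Real.cosh (c * x ^ (1+α)/(1+α)) * (c * x ^ α))) x := by
    have := ((hg.const_mul B).mul hu.sinh)
    exact this
  -- derivative of PhiG
  have hP : HasDerivAt (PhiG α k)
      (A * (-(α/2) * x ^ (-(α/2) - 1)) * Real.exp (-(c * x ^ (1+α)/(1+α)))
        + A * x ^ (-(α/2)) * (Real.exp (-(c * x ^ (1+α)/(1+α))) * (-(c * x ^ α)))) x := by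
    have := ((hg.const_mul A).mul hu.neg.exp)
    exact this
  rw [hF.deriv, hP.deriv]
  show A * x ^ (-(α/2)) * Real.exp (-(c * x ^ (1+α)/(1+α))) * _ - _ *
    (B * x ^ (-(α/2)) * Real.sinh (c * x ^ (1+α)/(1+α))) = 1 + α
  set u : ℝ := c * x ^ (1+α)/(1+α) with hu'
  have key : A * x ^ (-(α/2)) * Real.exp (-u) *
      (B * (-(α/2) * x ^ (-(α/2) - 1)) * Real.sinh u
        + B * x ^ (-(α/2)) * (Real.cosh u * (c * x ^ α)))
      - (A * (-(α/2) * x ^ (-(α/2) - 1)) * Real.exp (-u)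
        + A * x ^ (-(α/2)) * (Real.exp (-u) * (-(c * x ^ α))))
        * (B * x ^ (-(α/2)) * Real.sinh u)
      = A * B * (x ^ (-(α/2)) * x ^ (-(α/2))) * (c * x ^ α) * (Real.exp (-u) *
          (Real.cosh u + Real.sinh u)) := by ring
  rw [key, Real.cosh_add_sinh, Real.exp_neg, inv_mul_cancel₀ (Real.exp_ne_zero u)]
  have hpow : x ^ (-(α/2)) * x ^ (-(α/2)) * (c * x ^ α) = c := by
    rw [← Real.rpow_add hx]
    have : -(α/2) + -(α/2) = -α := by ring
    rw [this]
    rw [mul_comm c (x ^ α), ← mul_assoc, ← Real.rpow_add hx]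
    simp
  have hAB : A * B = (1 + α) / c := by
    rw [hA, hB, ← Real.sqrt_mul (by positivity)]
    have : Real.pi * (1 + α) / (2 * c) * (2 * (1 + α) / (Real.pi * c))
        = ((1 + α)/c) ^ 2 := by
      field_simp
    rw [this, Real.sqrt_sq (by positivity)]
  rw [mul_one, mul_assoc, hpow, hAB]
  field_simp
end

section
/- Let α ∈ (0,1), let k be a nonzero integer, and let g : ℝ → ℂ be continuous with compact support contained in (0,∞). Then the function u(r) := ∫₀^∞ G_{α,k}(r,ρ)·g(ρ) dρ is well defined and twice differentiable on (0,∞), and it satisfies −u''(r) + (k²r^{2α} + α(2+α)/(4r²))·u(r) = g(r) for every r > 0. -/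
open MeasureTheory

/-- The Green kernel `G_{α,k}(r,ρ)`, equal to `(1+α)⁻¹ Φ_{α,k}(r) F_{α,k}(ρ)` for `ρ < r`
and to `(1+α)⁻¹ F_{α,k}(r) Φ_{α,k}(ρ)` for `r ≤ ρ`. -/
noncomputable def GreenG (α : ℝ) (k : ℤ) (r ρ : ℝ) : ℝ :=
  if ρ < r then (1 + α)⁻¹ * PhiG α k r * FG α k ρ else (1 + α)⁻¹ * FG α k r * PhiG α k ρ

/-! ### Auxiliary functions -/

/-- The cosh-companion of `FG`. -/
noncomputable def FGc (α : ℝ) (k : ℤ) (x : ℝ) : ℝ :=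
  Real.sqrt (2 * (1 + α) / (Real.pi * |(k : ℝ)|)) * x ^ (-(α / 2)) *
    Real.cosh (|(k : ℝ)| * x ^ (1 + α) / (1 + α))

/-- The derivative of `PhiG`. -/
noncomputable def PhiD (α : ℝ) (k : ℤ) (x : ℝ) : ℝ :=
  (-(α / 2) / x - |(k : ℝ)| * x ^ α) * PhiG α k x

/-- The derivative of `FG`. -/
noncomputable def FD (α : ℝ) (k : ℤ) (x : ℝ) : ℝ :=
  -(α / 2) / x * FG α k x + |(k : ℝ)| * x ^ α * FGc α k x

/-- The potential. -/
noncomputable def qG (α : ℝ) (k : ℤ) (x : ℝ) : ℝ :=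
  (k : ℝ) ^ 2 * x ^ (2 * α) + α * (2 + α) / (4 * x ^ 2)

section derivs
variable {α : ℝ} {k : ℤ} {x : ℝ}

lemma hasDerivAt_inner (hα : 0 < α) (hx : 0 < x) :
    HasDerivAt (fun x : ℝ => |(k : ℝ)| * x ^ (1 + α) / (1 + α)) (|(k : ℝ)| * x ^ α) x := by
  have h1 : HasDerivAt (fun x : ℝ => x ^ (1 + α)) ((1 + α) * x ^ α) x := by
    have := Real.hasDerivAt_rpow_const (x := x) (p := 1 + α) (Or.inl hx.ne')
    simpa using this
  have := (h1.const_mul |(k : ℝ)|).div_const (1 + α)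
  refine this.congr_deriv ?_
  field_simp

lemma hasDerivAt_pow_part (hx : 0 < x) :
    HasDerivAt (fun x : ℝ => x ^ (-(α / 2))) (-(α / 2) / x * x ^ (-(α / 2))) x := by
  have h := Real.hasDerivAt_rpow_const (x := x) (p := -(α / 2)) (Or.inl hx.ne')
  have heq : -(α / 2) / x * x ^ (-(α / 2)) = -(α / 2) * x ^ (-(α / 2) - 1) := by
    rw [Real.rpow_sub hx, Real.rpow_one]
    field_simp
  rw [heq]; exact h

lemma hasDerivAt_phiG (hα : 0 < α) (hx : 0 < x) :
    HasDerivAt (PhiG α k) (PhiD α k x) x := by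
  have he : HasDerivAt (fun x : ℝ => Real.exp (-(|(k : ℝ)| * x ^ (1 + α) / (1 + α))))
      (Real.exp (-(|(k : ℝ)| * x ^ (1 + α) / (1 + α))) * (-(|(k : ℝ)| * x ^ α))) x :=
    ((hasDerivAt_inner hα hx).neg).exp
  have := ((hasDerivAt_pow_part (α := α) hx).const_mul
      (Real.sqrt (Real.pi * (1 + α) / (2 * |(k : ℝ)|)))).mul he
  refine this.congr_deriv ?_
  unfold PhiD PhiG
  ring

lemma hasDerivAt_fG (hα : 0 < α) (hx : 0 < x) :
    HasDerivAt (FG α k) (FD α k x) x := by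
  have he : HasDerivAt (fun x : ℝ => Real.sinh (|(k : ℝ)| * x ^ (1 + α) / (1 + α)))
      (Real.cosh (|(k : ℝ)| * x ^ (1 + α) / (1 + α)) * (|(k : ℝ)| * x ^ α)) x :=
    (hasDerivAt_inner hα hx).sinh
  have := ((hasDerivAt_pow_part (α := α) hx).const_mul
      (Real.sqrt (2 * (1 + α) / (Real.pi * |(k : ℝ)|)))).mul he
  refine this.congr_deriv ?_
  unfold FD FG FGc
  ring

lemma hasDerivAt_fGc (hα : 0 < α) (hx : 0 < x) :
    HasDerivAt (FGc α k)
      (-(α / 2) / x * FGc α k x + |(k : ℝ)| * x ^ α * FG α k x) x := by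
  have he : HasDerivAt (fun x : ℝ => Real.cosh (|(k : ℝ)| * x ^ (1 + α) / (1 + α)))
      (Real.sinh (|(k : ℝ)| * x ^ (1 + α) / (1 + α)) * (|(k : ℝ)| * x ^ α)) x :=
    (hasDerivAt_inner hα hx).cosh
  have := ((hasDerivAt_pow_part (α := α) hx).const_mul
      (Real.sqrt (2 * (1 + α) / (Real.pi * |(k : ℝ)|)))).mul he
  refine this.congr_deriv ?_
  unfold FG FGc
  ring

lemma hasDerivAt_coeff (hα : 0 < α) (hx : 0 < x) :
    HasDerivAt (fun x : ℝ => -(α / 2) / x) (α / 2 / x ^ 2) x := by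
  have h := (hasDerivAt_inv hx.ne').const_mul (-(α / 2))
  have heq : α / 2 / x ^ 2 = -(α / 2) * (-(x ^ 2)⁻¹) := by field_simp
  rw [heq]
  simpa [div_eq_mul_inv] using h

lemma hasDerivAt_Kxa (hx : 0 < x) :
    HasDerivAt (fun x : ℝ => |(k : ℝ)| * x ^ α) (|(k : ℝ)| * α * (x ^ α / x)) x := by
  have h := (Real.hasDerivAt_rpow_const (x := x) (p := α) (Or.inl hx.ne')).const_mul |(k : ℝ)|
  have heq : |(k : ℝ)| * α * (x ^ α / x) = |(k : ℝ)| * (α * x ^ (α - 1)) := by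
    rw [Real.rpow_sub hx, Real.rpow_one]; ring
  rw [heq]; exact h

lemma rpow_facts (hx : 0 < x) : x ^ (2 * α) = x ^ α * x ^ α := by
  rw [two_mul, Real.rpow_add hx]

lemma hasDerivAt_phiD (hα : 0 < α) (hx : 0 < x) :
    HasDerivAt (PhiD α k) (qG α k x * PhiG α k x) x := by
  have ha : HasDerivAt (fun x : ℝ => -(α / 2) / x - |(k : ℝ)| * x ^ α)
      (α / 2 / x ^ 2 - |(k : ℝ)| * α * (x ^ α / x)) x :=
    (hasDerivAt_coeff hα hx).sub (hasDerivAt_Kxa hx)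
  have h := ha.mul (hasDerivAt_phiG (k := k) hα hx)
  have h' : HasDerivAt (PhiD α k)
      ((α / 2 / x ^ 2 - |(k : ℝ)| * α * (x ^ α / x)) * PhiG α k x +
        (-(α / 2) / x - |(k : ℝ)| * x ^ α) * PhiD α k x) x := h
  convert h' using 1
  unfold qG PhiD
  rw [rpow_facts hx]
  field_simp
  rw [← sq_abs (k : ℝ)]
  ring

lemma hasDerivAt_fD (hα : 0 < α) (hx : 0 < x) :
    HasDerivAt (FD α k) (qG α k x * FG α k x) x := by
  have h := ((hasDerivAt_coeff (α := α) hα hx).mul (hasDerivAt_fG (k := k) hα hx)).add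
    ((hasDerivAt_Kxa (α := α) (k := k) hx).mul (hasDerivAt_fGc (k := k) hα hx))
  refine h.congr_deriv ?_
  unfold qG FD
  rw [rpow_facts hx]
  field_simp
  rw [← sq_abs (k : ℝ)]
  ring

lemma wronskian (hα : 0 < α) (hk : k ≠ 0) (hx : 0 < x) :
    PhiG α k x * FD α k x - PhiD α k x * FG α k x = 1 + α := by
  have hK : (0:ℝ) < |(k : ℝ)| := abs_pos.mpr (Int.cast_ne_zero.mpr hk)
  have hπ := Real.pi_pos
  have h1α : (0:ℝ) < 1 + α := by linarith
  have key : PhiG α k x * FD α k x - PhiD α k x * FG α k x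
      = |(k : ℝ)| * x ^ α * (PhiG α k x * (FGc α k x + FG α k x)) := by
    unfold PhiD FD; ring
  rw [key]
  have hsum : FGc α k x + FG α k x
      = Real.sqrt (2 * (1 + α) / (Real.pi * |(k : ℝ)|)) * x ^ (-(α / 2)) *
        Real.exp (|(k : ℝ)| * x ^ (1 + α) / (1 + α)) := by
    unfold FGc FG
    rw [show ∀ a c : ℝ, a * Real.cosh c + a * Real.sinh c = a * (Real.cosh c + Real.sinh c)
      from fun a c => by ring, Real.cosh_add_sinh]
  rw [hsum]
  unfold PhiG
  have hC : Real.sqrt (Real.pi * (1 + α) / (2 * |(k : ℝ)|)) *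
      Real.sqrt (2 * (1 + α) / (Real.pi * |(k : ℝ)|)) = (1 + α) / |(k : ℝ)| := by
    rw [← Real.sqrt_mul (by positivity)]
    rw [show Real.pi * (1 + α) / (2 * |(k : ℝ)|) * (2 * (1 + α) / (Real.pi * |(k : ℝ)|))
        = ((1 + α) / |(k : ℝ)|) ^ 2 from by field_simp]
    exact Real.sqrt_sq (by positivity)
  have hxx : x ^ (-(α / 2)) * x ^ (-(α / 2)) = x ^ (-α) := by
    rw [← Real.rpow_add hx]; ring_nf
  have hee : Real.exp (-(|(k : ℝ)| * x ^ (1 + α) / (1 + α))) *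
      Real.exp (|(k : ℝ)| * x ^ (1 + α) / (1 + α)) = 1 := by
    rw [← Real.exp_add]; simp
  have hxa : x ^ α * x ^ (-α) = 1 := by
    rw [← Real.rpow_add hx]; simp
  calc |(k : ℝ)| * x ^ α *
        (Real.sqrt (Real.pi * (1 + α) / (2 * |(k : ℝ)|)) * x ^ (-(α / 2)) *
          Real.exp (-(|(k : ℝ)| * x ^ (1 + α) / (1 + α))) *
        (Real.sqrt (2 * (1 + α) / (Real.pi * |(k : ℝ)|)) * x ^ (-(α / 2)) *
          Real.exp (|(k : ℝ)| * x ^ (1 + α) / (1 + α))))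
      = (Real.sqrt (Real.pi * (1 + α) / (2 * |(k : ℝ)|)) *
          Real.sqrt (2 * (1 + α) / (Real.pi * |(k : ℝ)|))) *
        (x ^ (-(α / 2)) * x ^ (-(α / 2))) *
        (Real.exp (-(|(k : ℝ)| * x ^ (1 + α) / (1 + α))) *
          Real.exp (|(k : ℝ)| * x ^ (1 + α) / (1 + α))) *
        (|(k : ℝ)| * x ^ α) := by ring
    _ = (1 + α) / |(k : ℝ)| * x ^ (-α) * 1 * (|(k : ℝ)| * x ^ α) := by
        rw [hC, hxx, hee]
    _ = (1 + α) * (x ^ α * x ^ (-α)) := by field_simp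
    _ = 1 + α := by rw [hxa, mul_one]

end derivs

/-! ### The integral operators -/

/-- `∫₀ʳ F(t) g(t) dt`. -/
noncomputable def AInt (α : ℝ) (k : ℤ) (g : ℝ → ℂ) (r : ℝ) : ℂ :=
  ∫ t in (0:ℝ)..r, (FG α k t : ℂ) * g t

/-- `∫₀ʳ Φ(t) g(t) dt`. -/
noncomputable def DInt (α : ℝ) (k : ℤ) (g : ℝ → ℂ) (r : ℝ) : ℂ :=
  ∫ t in (0:ℝ)..r, (PhiG α k t : ℂ) * g t

/-- `∫₀^∞ Φ(t) g(t) dt`. -/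
noncomputable def CInt (α : ℝ) (k : ℤ) (g : ℝ → ℂ) : ℂ :=
  ∫ t in Set.Ioi (0:ℝ), (PhiG α k t : ℂ) * g t

/-- The candidate solution. -/
noncomputable def UFun (α : ℝ) (k : ℤ) (g : ℝ → ℂ) (r : ℝ) : ℂ :=
  (((1 + α)⁻¹ : ℝ) : ℂ) *
    ((PhiG α k r : ℂ) * AInt α k g r + (FG α k r : ℂ) * (CInt α k g - DInt α k g r))

/-- The derivative of the candidate solution. -/
noncomputable def VFun (α : ℝ) (k : ℤ) (g : ℝ → ℂ) (r : ℝ) : ℂ :=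
  (((1 + α)⁻¹ : ℝ) : ℂ) *
    ((PhiD α k r : ℂ) * AInt α k g r + (FD α k r : ℂ) * (CInt α k g - DInt α k g r))

section integrals
variable {α : ℝ} {k : ℤ} {g : ℝ → ℂ}

lemma cont_mul_g (hg : Continuous g) (hgsupp : tsupport g ⊆ Set.Ioi 0)
    (F : ℝ → ℝ) (hF : ∀ x : ℝ, 0 < x → ContinuousAt F x) :
    Continuous fun ρ : ℝ => (F ρ : ℂ) * g ρ := by
  rw [continuous_iff_continuousAt]
  intro x
  by_cases hx : 0 < x
  · exact (Complex.continuous_ofReal.continuousAt.comp (hF x hx)).mul hg.continuousAt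
  · have hmem : x ∈ (tsupport g)ᶜ := fun h => hx (hgsupp h)
    have hev : (fun ρ : ℝ => (F ρ : ℂ) * g ρ) =ᶠ[nhds x] fun _ => 0 := by
      filter_upwards [(isClosed_tsupport g).isOpen_compl.mem_nhds hmem] with ρ hρ
      simp [image_eq_zero_of_notMem_tsupport hρ]
    exact hev.continuousAt

lemma cont_h₁ (hα : 0 < α) (hg : Continuous g) (hgsupp : tsupport g ⊆ Set.Ioi 0) :
    Continuous fun ρ : ℝ => (FG α k ρ : ℂ) * g ρ :=
  cont_mul_g hg hgsupp _ fun x hx => (hasDerivAt_fG hα hx).continuousAt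

lemma cont_h₂ (hα : 0 < α) (hg : Continuous g) (hgsupp : tsupport g ⊆ Set.Ioi 0) :
    Continuous fun ρ : ℝ => (PhiG α k ρ : ℂ) * g ρ :=
  cont_mul_g hg hgsupp _ fun x hx => (hasDerivAt_phiG hα hx).continuousAt

lemma int_h₁ (hα : 0 < α) (hg : Continuous g) (hgc : HasCompactSupport g)
    (hgsupp : tsupport g ⊆ Set.Ioi 0) :
    Integrable fun ρ : ℝ => (FG α k ρ : ℂ) * g ρ :=
  (cont_h₁ hα hg hgsupp).integrable_of_hasCompactSupport hgc.mul_left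

lemma int_h₂ (hα : 0 < α) (hg : Continuous g) (hgc : HasCompactSupport g)
    (hgsupp : tsupport g ⊆ Set.Ioi 0) :
    Integrable fun ρ : ℝ => (PhiG α k ρ : ℂ) * g ρ :=
  (cont_h₂ hα hg hgsupp).integrable_of_hasCompactSupport hgc.mul_left

lemma kernel_eq1 {r : ℝ} (hr : 0 < r) {ρ : ℝ} (hρ : ρ ∈ Set.Ioc (0:ℝ) r) :
    (GreenG α k r ρ : ℂ) * g ρ
      = (((1 + α)⁻¹ : ℝ) : ℂ) * (PhiG α k r : ℂ) * ((FG α k ρ : ℂ) * g ρ) := by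
  rcases lt_or_eq_of_le hρ.2 with h | h
  · unfold GreenG; rw [if_pos h]; push_cast; ring
  · subst h; unfold GreenG; rw [if_neg (lt_irrefl _)]; push_cast; ring

lemma kernel_eq2 {r ρ : ℝ} (hρ : ρ ∈ Set.Ioi r) :
    (GreenG α k r ρ : ℂ) * g ρ
      = (((1 + α)⁻¹ : ℝ) : ℂ) * (FG α k r : ℂ) * ((PhiG α k ρ : ℂ) * g ρ) := by
  unfold GreenG; rw [if_neg (not_lt.mpr (le_of_lt hρ))]; push_cast; ring

lemma integrableOn_piece1 (hα : 0 < α) (hg : Continuous g) (hgc : HasCompactSupport g)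
    (hgsupp : tsupport g ⊆ Set.Ioi 0) {r : ℝ} (hr : 0 < r) :
    IntegrableOn (fun ρ : ℝ => (GreenG α k r ρ : ℂ) * g ρ) (Set.Ioc 0 r) :=
  (((int_h₁ hα hg hgc hgsupp).const_mul _).integrableOn).congr_fun
    (fun ρ hρ => (kernel_eq1 hr hρ).symm) measurableSet_Ioc

lemma integrableOn_piece2 (hα : 0 < α) (hg : Continuous g) (hgc : HasCompactSupport g)
    (hgsupp : tsupport g ⊆ Set.Ioi 0) (r : ℝ) :
    IntegrableOn (fun ρ : ℝ => (GreenG α k r ρ : ℂ) * g ρ) (Set.Ioi r) :=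
  (((int_h₂ hα hg hgc hgsupp).const_mul _).integrableOn).congr_fun
    (fun ρ hρ => (kernel_eq2 hρ).symm) measurableSet_Ioi

lemma integrableOn_green (hα : 0 < α) (hg : Continuous g) (hgc : HasCompactSupport g)
    (hgsupp : tsupport g ⊆ Set.Ioi 0) {r : ℝ} (hr : 0 < r) :
    IntegrableOn (fun ρ : ℝ => (GreenG α k r ρ : ℂ) * g ρ) (Set.Ioi 0) := by
  rw [← Set.Ioc_union_Ioi_eq_Ioi hr.le]
  exact (integrableOn_piece1 hα hg hgc hgsupp hr).union (integrableOn_piece2 hα hg hgc hgsupp r)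

lemma green_rep (hα : 0 < α) (hg : Continuous g) (hgc : HasCompactSupport g)
    (hgsupp : tsupport g ⊆ Set.Ioi 0) {r : ℝ} (hr : 0 < r) :
    (∫ ρ in Set.Ioi (0:ℝ), (GreenG α k r ρ : ℂ) * g ρ) = UFun α k g r := by
  have hi₂ := int_h₂ (k := k) hα hg hgc hgsupp
  have hsplit2 : CInt α k g
      = (∫ t in Set.Ioc (0:ℝ) r, (PhiG α k t : ℂ) * g t)
        + ∫ t in Set.Ioi r, (PhiG α k t : ℂ) * g t := by
    rw [CInt, ← setIntegral_union (Set.Ioc_disjoint_Ioi le_rfl) measurableSet_Ioi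
      hi₂.integrableOn hi₂.integrableOn, Set.Ioc_union_Ioi_eq_Ioi hr.le]
  have hAr : AInt α k g r = ∫ ρ in Set.Ioc (0:ℝ) r, (FG α k ρ : ℂ) * g ρ :=
    intervalIntegral.integral_of_le hr.le
  have hDr : DInt α k g r = ∫ ρ in Set.Ioc (0:ℝ) r, (PhiG α k ρ : ℂ) * g ρ :=
    intervalIntegral.integral_of_le hr.le
  calc ∫ ρ in Set.Ioi (0:ℝ), (GreenG α k r ρ : ℂ) * g ρ
      = (∫ ρ in Set.Ioc (0:ℝ) r, (GreenG α k r ρ : ℂ) * g ρ)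
        + ∫ ρ in Set.Ioi r, (GreenG α k r ρ : ℂ) * g ρ := by
        rw [← Set.Ioc_union_Ioi_eq_Ioi hr.le]
        exact setIntegral_union (Set.Ioc_disjoint_Ioi le_rfl) measurableSet_Ioi
          (integrableOn_piece1 hα hg hgc hgsupp hr) (integrableOn_piece2 hα hg hgc hgsupp r)
    _ = (∫ ρ in Set.Ioc (0:ℝ) r,
          (((1 + α)⁻¹ : ℝ) : ℂ) * (PhiG α k r : ℂ) * ((FG α k ρ : ℂ) * g ρ))
        + ∫ ρ in Set.Ioi r,
          (((1 + α)⁻¹ : ℝ) : ℂ) * (FG α k r : ℂ) * ((PhiG α k ρ : ℂ) * g ρ) := by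
        rw [setIntegral_congr_fun measurableSet_Ioc (fun ρ hρ => kernel_eq1 hr hρ),
          setIntegral_congr_fun measurableSet_Ioi (fun ρ hρ => kernel_eq2 hρ)]
    _ = (((1 + α)⁻¹ : ℝ) : ℂ) * (PhiG α k r : ℂ)
          * (∫ ρ in Set.Ioc (0:ℝ) r, (FG α k ρ : ℂ) * g ρ)
        + (((1 + α)⁻¹ : ℝ) : ℂ) * (FG α k r : ℂ)
          * ∫ ρ in Set.Ioi r, (PhiG α k ρ : ℂ) * g ρ := by
        rw [integral_const_mul, integral_const_mul]
    _ = UFun α k g r := by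
        have h2 : (∫ ρ in Set.Ioi r, (PhiG α k ρ : ℂ) * g ρ) = CInt α k g - DInt α k g r := by
          rw [hsplit2, hDr]; ring
        rw [h2, UFun, hAr]; ring

end integrals

section derivU
variable {α : ℝ} {k : ℤ} {g : ℝ → ℂ}

lemma hasDerivAt_AInt (hα : 0 < α) (hg : Continuous g) (hgsupp : tsupport g ⊆ Set.Ioi 0)
    (r : ℝ) : HasDerivAt (AInt α k g) ((FG α k r : ℂ) * g r) r := by
  have hc := cont_h₁ (k := k) hα hg hgsupp
  exact intervalIntegral.integral_hasDerivAt_right (hc.intervalIntegrable _ _)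
    (hc.stronglyMeasurableAtFilter _ _) hc.continuousAt

lemma hasDerivAt_DInt (hα : 0 < α) (hg : Continuous g) (hgsupp : tsupport g ⊆ Set.Ioi 0)
    (r : ℝ) : HasDerivAt (DInt α k g) ((PhiG α k r : ℂ) * g r) r := by
  have hc := cont_h₂ (k := k) hα hg hgsupp
  exact intervalIntegral.integral_hasDerivAt_right (hc.intervalIntegrable _ _)
    (hc.stronglyMeasurableAtFilter _ _) hc.continuousAt

lemma hasDerivAt_UFun (hα : 0 < α) (hg : Continuous g) (hgsupp : tsupport g ⊆ Set.Ioi 0)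
    {r : ℝ} (hr : 0 < r) : HasDerivAt (UFun α k g) (VFun α k g r) r := by
  have hΦ : HasDerivAt (fun x : ℝ => ((PhiG α k x : ℝ) : ℂ)) ((PhiD α k r : ℝ) : ℂ) r :=
    (hasDerivAt_phiG hα hr).ofReal_comp
  have hF : HasDerivAt (fun x : ℝ => ((FG α k x : ℝ) : ℂ)) ((FD α k r : ℝ) : ℂ) r :=
    (hasDerivAt_fG hα hr).ofReal_comp
  have hA := hasDerivAt_AInt (k := k) hα hg hgsupp r
  have hD := hasDerivAt_DInt (k := k) hα hg hgsupp r
  have h := ((hΦ.mul hA).add (hF.mul ((hasDerivAt_const r (CInt α k g)).sub hD))).const_mul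
    ((((1 + α)⁻¹ : ℝ) : ℂ))
  have h' : HasDerivAt (UFun α k g)
      ((((1 + α)⁻¹ : ℝ) : ℂ) *
        (((PhiD α k r : ℝ) : ℂ) * AInt α k g r + (PhiG α k r : ℂ) * ((FG α k r : ℂ) * g r) +
          (((FD α k r : ℝ) : ℂ) * (CInt α k g - DInt α k g r) +
            (FG α k r : ℂ) * (0 - (PhiG α k r : ℂ) * g r)))) r := h
  have heq : (((1 + α)⁻¹ : ℝ) : ℂ) *
      (((PhiD α k r : ℝ) : ℂ) * AInt α k g r + (PhiG α k r : ℂ) * ((FG α k r : ℂ) * g r) +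
        (((FD α k r : ℝ) : ℂ) * (CInt α k g - DInt α k g r) +
          (FG α k r : ℂ) * (0 - (PhiG α k r : ℂ) * g r))) = VFun α k g r := by
    unfold VFun; ring
  rw [heq] at h'
  exact h'

lemma hasDerivAt_VFun (hα : 0 < α) (hk : k ≠ 0) (hg : Continuous g)
    (hgsupp : tsupport g ⊆ Set.Ioi 0) {r : ℝ} (hr : 0 < r) :
    HasDerivAt (VFun α k g) (((qG α k r : ℝ) : ℂ) * UFun α k g r - g r) r := by
  have h1α : (0:ℝ) < 1 + α := by linarith
  have hΦ : HasDerivAt (fun x : ℝ => ((PhiD α k x : ℝ) : ℂ)) ((qG α k r * PhiG α k r : ℝ) : ℂ) r :=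
    (hasDerivAt_phiD hα hr).ofReal_comp
  have hF : HasDerivAt (fun x : ℝ => ((FD α k x : ℝ) : ℂ)) ((qG α k r * FG α k r : ℝ) : ℂ) r :=
    (hasDerivAt_fD hα hr).ofReal_comp
  have hA := hasDerivAt_AInt (k := k) hα hg hgsupp r
  have hD := hasDerivAt_DInt (k := k) hα hg hgsupp r
  have h := ((hΦ.mul hA).add (hF.mul ((hasDerivAt_const r (CInt α k g)).sub hD))).const_mul
    ((((1 + α)⁻¹ : ℝ) : ℂ))
  have h' : HasDerivAt (VFun α k g)
      ((((1 + α)⁻¹ : ℝ) : ℂ) *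
        (((qG α k r * PhiG α k r : ℝ) : ℂ) * AInt α k g r
          + (PhiD α k r : ℂ) * ((FG α k r : ℂ) * g r) +
          (((qG α k r * FG α k r : ℝ) : ℂ) * (CInt α k g - DInt α k g r) +
            (FD α k r : ℂ) * (0 - (PhiG α k r : ℂ) * g r)))) r := h
  have hw : ((PhiG α k r : ℝ) : ℂ) * ((FD α k r : ℝ) : ℂ)
      - ((PhiD α k r : ℝ) : ℂ) * ((FG α k r : ℝ) : ℂ) = ((1 + α : ℝ) : ℂ) := by
    rw [← Complex.ofReal_mul, ← Complex.ofReal_mul, ← Complex.ofReal_sub,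
      wronskian hα hk hr]
  have key : (((1 + α)⁻¹ : ℝ) : ℂ) * (((PhiD α k r : ℝ) : ℂ) * ((FG α k r : ℝ) : ℂ)
      - ((FD α k r : ℝ) : ℂ) * ((PhiG α k r : ℝ) : ℂ)) = -1 := by
    have h2 : ((PhiD α k r : ℝ) : ℂ) * ((FG α k r : ℝ) : ℂ)
        - ((FD α k r : ℝ) : ℂ) * ((PhiG α k r : ℝ) : ℂ) = -(((1 + α : ℝ) : ℂ)) := by
      linear_combination -hw
    have h3 : (1 + α)⁻¹ * (-(1 + α)) = -1 := by field_simp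
    rw [h2, ← Complex.ofReal_neg, ← Complex.ofReal_mul, h3]
    norm_num
  have heq : (((1 + α)⁻¹ : ℝ) : ℂ) *
      (((qG α k r * PhiG α k r : ℝ) : ℂ) * AInt α k g r
        + (PhiD α k r : ℂ) * ((FG α k r : ℂ) * g r) +
        (((qG α k r * FG α k r : ℝ) : ℂ) * (CInt α k g - DInt α k g r) +
          (FD α k r : ℂ) * (0 - (PhiG α k r : ℂ) * g r)))
      = ((qG α k r : ℝ) : ℂ) * UFun α k g r - g r := by
    rw [Complex.ofReal_mul, Complex.ofReal_mul]
    unfold UFun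
    linear_combination (g r) * key
  rw [heq] at h'
  exact h'

end derivU

/-- For `α ∈ (0,1)`, nonzero `k`, and continuous `g : ℝ → ℂ` with compact
support contained in `(0,∞)`, the function `u(r) = ∫₀^∞ G_{α,k}(r,ρ) g(ρ) dρ` is well defined
and twice differentiable on `(0,∞)`, and satisfies
`−u''(r) + (k²r^{2α} + α(2+α)/(4r²)) u(r) = g(r)` for every `r > 0`. -/
theorem green_kernel_solves_inhomogeneous_ODE (α : ℝ) (hα0 : 0 < α) (hα1 : α < 1)
    (k : ℤ) (hk : k ≠ 0) (g : ℝ → ℂ) (hg : Continuous g) (hgc : HasCompactSupport g)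
    (hgsupp : tsupport g ⊆ Set.Ioi 0) :
    (∀ r : ℝ, 0 < r →
      IntegrableOn (fun ρ : ℝ => (GreenG α k r ρ : ℂ) * g ρ) (Set.Ioi 0)) ∧
    (∀ r : ℝ, 0 < r →
      DifferentiableAt ℝ
        (fun r' : ℝ => ∫ ρ in Set.Ioi (0 : ℝ), (GreenG α k r' ρ : ℂ) * g ρ) r ∧
      DifferentiableAt ℝ
        (deriv fun r' : ℝ => ∫ ρ in Set.Ioi (0 : ℝ), (GreenG α k r' ρ : ℂ) * g ρ) r ∧
      -(deriv (deriv fun r' : ℝ => ∫ ρ in Set.Ioi (0 : ℝ), (GreenG α k r' ρ : ℂ) * g ρ) r) +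
          (((k : ℝ) ^ 2 * r ^ (2 * α) + α * (2 + α) / (4 * r ^ 2) : ℝ) : ℂ) *
            ∫ ρ in Set.Ioi (0 : ℝ), (GreenG α k r ρ : ℂ) * g ρ = g r) := by
  refine ⟨fun r hr => integrableOn_green hα0 hg hgc hgsupp hr, fun r hr => ?_⟩
  have hev : (fun r' : ℝ => ∫ ρ in Set.Ioi (0:ℝ), (GreenG α k r' ρ : ℂ) * g ρ)
      =ᶠ[nhds r] UFun α k g := by
    filter_upwards [isOpen_Ioi.mem_nhds hr] with x hx
    exact green_rep hα0 hg hgc hgsupp hx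
  have hU := hasDerivAt_UFun (k := k) hα0 hg hgsupp hr
  have hV := hasDerivAt_VFun hα0 hk hg hgsupp hr
  have hdev : deriv (fun r' : ℝ => ∫ ρ in Set.Ioi (0:ℝ), (GreenG α k r' ρ : ℂ) * g ρ)
      =ᶠ[nhds r] VFun α k g := by
    refine hev.deriv.trans ?_
    filter_upwards [isOpen_Ioi.mem_nhds hr] with x hx
    exact (hasDerivAt_UFun hα0 hg hgsupp hx).deriv
  refine ⟨hU.differentiableAt.congr_of_eventuallyEq hev,
    hV.differentiableAt.congr_of_eventuallyEq hdev, ?_⟩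
  have hderiv2 : deriv (deriv fun r' : ℝ =>
      ∫ ρ in Set.Ioi (0:ℝ), (GreenG α k r' ρ : ℂ) * g ρ) r
      = ((qG α k r : ℝ) : ℂ) * UFun α k g r - g r := by
    rw [hdev.deriv_eq]
    exact hV.deriv
  rw [hderiv2, green_rep hα0 hg hgc hgsupp hr]
  have hq : (((k : ℝ) ^ 2 * r ^ (2 * α) + α * (2 + α) / (4 * r ^ 2) : ℝ) : ℂ)
      = ((qG α k r : ℝ) : ℂ) := rfl
  rw [hq]
  ring
end

section
/- Let α ∈ (0,1) and let k be a nonzero integer. The integral defining Ψ_{α,k}(x) = ∫₀^∞ G_{α,k}(x,ρ)·Φ_{α,k}(ρ) dρ converges for every x > 0, and as x → 0⁺ one has the asymptotics Ψ_{α,k}(x) = √(2|k|/(π(1+α)³)) · (∫₀^∞ Φ_{α,k}²) · x^{1+α/2} + o(x^{3/2}); that is, Ψ_{α,k}(x) − √(2|k|/(π(1+α)³)) · ‖Φ_{α,k}‖²_{L²(0,∞)} · x^{1+α/2} is little-o of x^{3/2} as x → 0⁺. -/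
open MeasureTheory Filter Topology Asymptotics

/-- The function `Ψ_{α,k}(x) = ∫₀^∞ G_{α,k}(x,ρ) Φ_{α,k}(ρ) dρ`. -/
noncomputable def PsiG (α : ℝ) (k : ℤ) (x : ℝ) : ℝ :=
  ∫ ρ in Set.Ioi (0 : ℝ), GreenG α k x ρ * PhiG α k ρ

namespace PsiGAux

open Real Set

variable {α : ℝ} {k : ℤ}

lemma measurable_phiG : Measurable (PhiG α k) := by
  unfold PhiG; fun_prop

lemma measurable_FG : Measurable (FG α k) := by
  unfold FG; fun_prop

lemma phiG_nonneg (hα0 : 0 < α) {x : ℝ} (hx : 0 < x) : 0 ≤ PhiG α k x := by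
  unfold PhiG
  exact mul_nonneg (mul_nonneg (Real.sqrt_nonneg _) (Real.rpow_nonneg hx.le _))
    (Real.exp_pos _).le

lemma FG_nonneg (hα0 : 0 < α) {x : ℝ} (hx : 0 < x) : 0 ≤ FG α k x := by
  unfold FG
  have h1α : (0:ℝ) < 1 + α := by linarith
  have hs : 0 ≤ Real.sinh (|(k:ℝ)| * x ^ (1 + α) / (1 + α)) :=
    Real.sinh_nonneg_iff.mpr (by
      have := Real.rpow_nonneg hx.le (1 + α)
      positivity)
  exact mul_nonneg (mul_nonneg (Real.sqrt_nonneg _) (Real.rpow_nonneg hx.le _)) hs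

lemma phiG_le (hα0 : 0 < α) {x : ℝ} (hx : 0 < x) :
    PhiG α k x ≤ Real.sqrt (Real.pi * (1 + α) / (2 * |(k:ℝ)|)) * x ^ (-(α / 2)) := by
  unfold PhiG
  have h1α : (0:ℝ) < 1 + α := by linarith
  have hrp := Real.rpow_nonneg hx.le (1 + α)
  have h1 : Real.exp (-(|(k:ℝ)| * x ^ (1 + α) / (1 + α))) ≤ 1 := by
    rw [Real.exp_le_one_iff]
    have : (0:ℝ) ≤ |(k:ℝ)| * x ^ (1 + α) / (1 + α) := by positivity
    linarith
  exact mul_le_of_le_one_right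
    (mul_nonneg (Real.sqrt_nonneg _) (Real.rpow_nonneg hx.le _)) h1

lemma phiG_sq_eq (hα0 : 0 < α) {x : ℝ} (hx : 0 < x) :
    PhiG α k x ^ 2 = (Real.pi * (1 + α) / (2 * |(k:ℝ)|)) * x ^ (-α) *
      Real.exp (-(2 * (|(k:ℝ)| * x ^ (1 + α) / (1 + α)))) := by
  unfold PhiG
  have h1α : (0:ℝ) < 1 + α := by linarith
  have hA : (0:ℝ) ≤ Real.pi * (1 + α) / (2 * |(k:ℝ)|) := by positivity
  have h1 : (x ^ (-(α/2))) ^ 2 = x ^ (-α) := by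
    rw [← Real.rpow_natCast (x ^ (-(α/2))) 2, ← Real.rpow_mul hx.le]
    norm_num
  have h2 : (Real.exp (-(|(k:ℝ)| * x ^ (1 + α) / (1 + α)))) ^ 2
      = Real.exp (-(2 * (|(k:ℝ)| * x ^ (1 + α) / (1 + α)))) := by
    rw [sq, ← Real.exp_add]
    congr 1
    ring
  rw [mul_pow, mul_pow, Real.sq_sqrt hA, h1, h2]

lemma phiG_sq_le (hα0 : 0 < α) {x : ℝ} (hx : 0 < x) :
    PhiG α k x ^ 2 ≤ (Real.pi * (1 + α) / (2 * |(k:ℝ)|)) * x ^ (-α) := by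
  rw [phiG_sq_eq hα0 hx]
  have h1α : (0:ℝ) < 1 + α := by linarith
  have hrp := Real.rpow_nonneg hx.le (1 + α)
  have h1 : Real.exp (-(2 * (|(k:ℝ)| * x ^ (1 + α) / (1 + α)))) ≤ 1 := by
    rw [Real.exp_le_one_iff]
    have : (0:ℝ) ≤ |(k:ℝ)| * x ^ (1 + α) / (1 + α) := by positivity
    linarith
  exact mul_le_of_le_one_right
    (mul_nonneg (by positivity) (Real.rpow_nonneg hx.le _)) h1

lemma sinh_mul_exp_neg_le {t : ℝ} (ht : 0 ≤ t) : Real.sinh t * Real.exp (-t) ≤ t := by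
  rw [Real.sinh_eq]
  have h1 : Real.exp t * Real.exp (-t) = 1 := by rw [← Real.exp_add]; simp
  have h2 : Real.exp (-t) * Real.exp (-t) = Real.exp (-(2*t)) := by
    rw [← Real.exp_add]; congr 1; ring
  have h3 : 1 - 2*t ≤ Real.exp (-(2*t)) := by
    have := Real.add_one_le_exp (-(2*t)); linarith
  nlinarith [Real.exp_pos (-t), Real.exp_pos t]

lemma sqrtAB (hα0 : 0 < α) (hk : k ≠ 0) :
    Real.sqrt (Real.pi * (1 + α) / (2 * |(k:ℝ)|)) *
      Real.sqrt (2 * (1 + α) / (Real.pi * |(k:ℝ)|)) = (1 + α) / |(k:ℝ)| := by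
  have hkr : (0:ℝ) < |(k:ℝ)| := abs_pos.mpr (Int.cast_ne_zero.mpr hk)
  have h1α : (0:ℝ) < 1 + α := by linarith
  have hπ := Real.pi_pos
  rw [← Real.sqrt_mul (by positivity)]
  have hstep : Real.pi * (1 + α) / (2 * |(k:ℝ)|) * (2 * (1 + α) / (Real.pi * |(k:ℝ)|))
      = ((1 + α) / |(k:ℝ)|) ^ 2 := by
    rw [div_pow, sq_abs, div_mul_div_comm,
      show 2 * |(k:ℝ)| * (Real.pi * |(k:ℝ)|) = 2 * Real.pi * (k:ℝ)^2 from by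
        rw [show ((k:ℝ))^2 = |(k:ℝ)| * |(k:ℝ)| from by rw [abs_mul_abs_self]; ring]; ring,
      show Real.pi * (1 + α) * (2 * (1 + α)) = 2 * Real.pi * (1 + α)^2 from by ring,
      mul_div_mul_left _ _ (by positivity : (2:ℝ) * Real.pi ≠ 0)]
  rw [hstep]
  exact Real.sqrt_sq (by positivity)

lemma FPhi_nonneg (hα0 : 0 < α) {ρ : ℝ} (hρ : 0 < ρ) :
    0 ≤ FG α k ρ * PhiG α k ρ :=
  mul_nonneg (FG_nonneg hα0 hρ) (phiG_nonneg hα0 hρ)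

lemma FPhi_le (hα0 : 0 < α) (hk : k ≠ 0) {ρ : ℝ} (hρ : 0 < ρ) :
    FG α k ρ * PhiG α k ρ ≤ ρ := by
  have hkr : (0:ℝ) < |(k:ℝ)| := abs_pos.mpr (Int.cast_ne_zero.mpr hk)
  have h1α : (0:ℝ) < 1 + α := by linarith
  have hrp := Real.rpow_nonneg hρ.le (1 + α)
  have ht : (0:ℝ) ≤ |(k:ℝ)| * ρ ^ (1 + α) / (1 + α) := by positivity
  unfold FG PhiG
  have key : Real.sqrt (2 * (1 + α) / (Real.pi * |(k:ℝ)|)) * ρ ^ (-(α/2)) *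
        Real.sinh (|(k:ℝ)| * ρ ^ (1 + α) / (1 + α)) *
      (Real.sqrt (Real.pi * (1 + α) / (2 * |(k:ℝ)|)) * ρ ^ (-(α/2)) *
        Real.exp (-(|(k:ℝ)| * ρ ^ (1 + α) / (1 + α))))
      = ((1 + α) / |(k:ℝ)|) * (ρ ^ (-(α/2)) * ρ ^ (-(α/2))) *
        (Real.sinh (|(k:ℝ)| * ρ ^ (1 + α) / (1 + α)) *
          Real.exp (-(|(k:ℝ)| * ρ ^ (1 + α) / (1 + α)))) := by
    rw [← sqrtAB hα0 hk]
    ring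
  rw [key]
  have hρρ : ρ ^ (-(α/2)) * ρ ^ (-(α/2)) = ρ ^ (-α) := by
    rw [← Real.rpow_add hρ]; congr 1; ring
  rw [hρρ]
  have hcoef : (0:ℝ) ≤ (1 + α) / |(k:ℝ)| * ρ ^ (-α) :=
    mul_nonneg (by positivity) (Real.rpow_nonneg hρ.le _)
  calc (1 + α) / |(k:ℝ)| * ρ ^ (-α) *
        (Real.sinh (|(k:ℝ)| * ρ ^ (1 + α) / (1 + α)) *
          Real.exp (-(|(k:ℝ)| * ρ ^ (1 + α) / (1 + α))))
      ≤ (1 + α) / |(k:ℝ)| * ρ ^ (-α) * (|(k:ℝ)| * ρ ^ (1 + α) / (1 + α)) :=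
        mul_le_mul_of_nonneg_left (sinh_mul_exp_neg_le ht) hcoef
    _ = (ρ ^ (-α) * ρ ^ (1 + α)) * ((1 + α) / |(k:ℝ)| * (|(k:ℝ)| / (1 + α))) := by ring
    _ = ρ := by
        rw [← Real.rpow_add hρ, show -α + (1 + α) = 1 by ring, Real.rpow_one]
        field_simp

lemma abs_sinh_sub_le {t : ℝ} (h0 : 0 ≤ t) (h1 : t ≤ 1) : |Real.sinh t - t| ≤ t ^ 3 := by
  have hb1 := Real.exp_bound (x := t) (by rwa [abs_of_nonneg h0]) (n := 3) (by norm_num)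
  have hb2 := Real.exp_bound (x := -t) (by rwa [abs_neg, abs_of_nonneg h0]) (n := 3)
    (by norm_num)
  rw [abs_of_nonneg h0] at hb1
  rw [abs_neg, abs_of_nonneg h0] at hb2
  simp only [Finset.sum_range_succ, Finset.sum_range_zero] at hb1 hb2
  norm_num [Nat.factorial] at hb1 hb2
  rw [Real.sinh_eq]
  rw [abs_le] at hb1 hb2 ⊢
  constructor <;> nlinarith [hb1.1, hb1.2, hb2.1, hb2.2, pow_nonneg h0 3]

lemma integrableOn_phiG_sq (hα0 : 0 < α) (hα1 : α < 1) (hk : k ≠ 0) :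
    IntegrableOn (fun ρ : ℝ => PhiG α k ρ ^ 2) (Set.Ioi 0) := by
  have hkr : (0:ℝ) < |(k:ℝ)| := abs_pos.mpr (Int.cast_ne_zero.mpr hk)
  have h1α : (0:ℝ) < 1 + α := by linarith
  have hπ := Real.pi_pos
  have hmeas : Measurable (fun ρ : ℝ => PhiG α k ρ ^ 2) := measurable_phiG.pow_const 2
  have hIoo : IntegrableOn (fun ρ : ℝ => PhiG α k ρ ^ 2) (Set.Ioo 0 1) := by
    have hg : IntegrableOn
        (fun ρ : ℝ => (Real.pi * (1 + α) / (2 * |(k:ℝ)|)) * ρ ^ (-α)) (Set.Ioo 0 1) :=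
      ((intervalIntegral.integrableOn_Ioo_rpow_iff zero_lt_one).mpr (by linarith)).const_mul _
    apply Integrable.mono' hg hmeas.aestronglyMeasurable.restrict
    filter_upwards [ae_restrict_mem measurableSet_Ioo] with ρ hρ
    rw [Real.norm_eq_abs, abs_of_nonneg (sq_nonneg _)]
    exact phiG_sq_le hα0 hρ.1
  have hIci : IntegrableOn (fun ρ : ℝ => PhiG α k ρ ^ 2) (Set.Ici 1) := by
    have hg : IntegrableOn
        (fun ρ : ℝ => (Real.pi * (1 + α) / (2 * |(k:ℝ)|)) *
          Real.exp (-(2 * |(k:ℝ)| / (1 + α)) * ρ)) (Set.Ici 1) := by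
      refine (((exp_neg_integrableOn_Ioi 0 (by positivity)).mono_set ?_).const_mul _)
      exact Set.Ici_subset_Ioi.mpr zero_lt_one
    apply Integrable.mono' hg hmeas.aestronglyMeasurable.restrict
    filter_upwards [ae_restrict_mem measurableSet_Ici] with ρ hρ
    have hρ0 : (0:ℝ) < ρ := lt_of_lt_of_le zero_lt_one hρ
    rw [Real.norm_eq_abs, abs_of_nonneg (sq_nonneg _), phiG_sq_eq hα0 hρ0]
    have h1 : ρ ^ (-α) ≤ 1 := Real.rpow_le_one_of_one_le_of_nonpos hρ (by linarith)
    have h2 : Real.exp (-(2 * (|(k:ℝ)| * ρ ^ (1 + α) / (1 + α))))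
        ≤ Real.exp (-(2 * |(k:ℝ)| / (1 + α)) * ρ) := by
      apply Real.exp_le_exp.mpr
      have hle : ρ ≤ ρ ^ (1 + α) := by
        calc ρ = ρ ^ (1:ℝ) := (Real.rpow_one ρ).symm
          _ ≤ ρ ^ (1 + α) := Real.rpow_le_rpow_of_exponent_le hρ (by linarith)
      have hmono := mul_le_mul_of_nonneg_left hle
        (show (0:ℝ) ≤ 2 * |(k:ℝ)| / (1 + α) by positivity)
      calc -(2 * (|(k:ℝ)| * ρ ^ (1 + α) / (1 + α)))
          = -(2 * |(k:ℝ)| / (1 + α) * ρ ^ (1 + α)) := by ring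
        _ ≤ -(2 * |(k:ℝ)| / (1 + α) * ρ) := neg_le_neg hmono
        _ = -(2 * |(k:ℝ)| / (1 + α)) * ρ := by ring
    have hA : (0:ℝ) ≤ Real.pi * (1 + α) / (2 * |(k:ℝ)|) := by positivity
    calc (Real.pi * (1 + α) / (2 * |(k:ℝ)|)) * ρ ^ (-α) *
          Real.exp (-(2 * (|(k:ℝ)| * ρ ^ (1 + α) / (1 + α))))
        ≤ (Real.pi * (1 + α) / (2 * |(k:ℝ)|)) * 1 *
            Real.exp (-(2 * |(k:ℝ)| / (1 + α)) * ρ) := by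
          apply mul_le_mul (by nlinarith) h2 (Real.exp_pos _).le (by positivity)
      _ = (Real.pi * (1 + α) / (2 * |(k:ℝ)|)) *
            Real.exp (-(2 * |(k:ℝ)| / (1 + α)) * ρ) := by ring
  rw [show Set.Ioi (0:ℝ) = Set.Ioo 0 1 ∪ Set.Ici 1 from
    (Set.Ioo_union_Ici_eq_Ioi zero_lt_one).symm]
  exact hIoo.union hIci

lemma integrableOn_FPhi (hα0 : 0 < α) (hk : k ≠ 0) {x : ℝ} (hx : 0 < x) :
    IntegrableOn (fun ρ : ℝ => FG α k ρ * PhiG α k ρ) (Set.Ioo 0 x) := by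
  apply Measure.integrableOn_of_bounded (M := x) measure_Ioo_lt_top.ne
    (measurable_FG.mul measurable_phiG).aestronglyMeasurable
  filter_upwards [ae_restrict_mem measurableSet_Ioo] with ρ hρ
  rw [Real.norm_eq_abs, Pi.mul_apply, abs_of_nonneg (FPhi_nonneg hα0 hρ.1)]
  exact (FPhi_le hα0 hk hρ.1).trans hρ.2.le

lemma integrableOn_green_left (hα0 : 0 < α) (hk : k ≠ 0) {x : ℝ} (hx : 0 < x) :
    IntegrableOn (fun ρ : ℝ => GreenG α k x ρ * PhiG α k ρ) (Set.Ioo 0 x) := by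
  apply IntegrableOn.congr_fun
    (((integrableOn_FPhi hα0 hk hx).const_mul ((1 + α)⁻¹ * PhiG α k x)))
    (fun ρ hρ => ?_) measurableSet_Ioo
  unfold GreenG
  rw [if_pos hρ.2]
  ring

lemma integrableOn_green_right (hα0 : 0 < α) (hα1 : α < 1) (hk : k ≠ 0)
    {x : ℝ} (hx : 0 < x) :
    IntegrableOn (fun ρ : ℝ => GreenG α k x ρ * PhiG α k ρ) (Set.Ici x) := by
  apply IntegrableOn.congr_fun
    ((((integrableOn_phiG_sq hα0 hα1 hk).mono_set
        (Set.Ici_subset_Ioi.mpr hx)).const_mul ((1 + α)⁻¹ * FG α k x)))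
    (fun ρ hρ => ?_) measurableSet_Ici
  unfold GreenG
  rw [if_neg (not_lt.mpr hρ)]
  ring

lemma integrableOn_green (hα0 : 0 < α) (hα1 : α < 1) (hk : k ≠ 0) {x : ℝ} (hx : 0 < x) :
    IntegrableOn (fun ρ : ℝ => GreenG α k x ρ * PhiG α k ρ) (Set.Ioi 0) := by
  rw [show Set.Ioi (0:ℝ) = Set.Ioo 0 x ∪ Set.Ici x from (Set.Ioo_union_Ici_eq_Ioi hx).symm]
  exact (integrableOn_green_left hα0 hk hx).union (integrableOn_green_right hα0 hα1 hk hx)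

lemma psiG_split (hα0 : 0 < α) (hα1 : α < 1) (hk : k ≠ 0) {x : ℝ} (hx : 0 < x) :
    PsiG α k x
      = (1 + α)⁻¹ * PhiG α k x * (∫ ρ in Set.Ioo 0 x, FG α k ρ * PhiG α k ρ)
      + (1 + α)⁻¹ * FG α k x * (∫ ρ in Set.Ici x, PhiG α k ρ ^ 2) := by
  have hdisj : Disjoint (Set.Ioo (0:ℝ) x) (Set.Ici x) :=
    Set.disjoint_left.mpr fun a ha hb => absurd ha.2 (not_lt.mpr hb)
  unfold PsiG
  rw [show Set.Ioi (0:ℝ) = Set.Ioo 0 x ∪ Set.Ici x from (Set.Ioo_union_Ici_eq_Ioi hx).symm,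
    setIntegral_union hdisj measurableSet_Ici (integrableOn_green_left hα0 hk hx)
      (integrableOn_green_right hα0 hα1 hk hx)]
  congr 1
  · rw [setIntegral_congr_fun measurableSet_Ioo
      (show Set.EqOn (fun ρ : ℝ => GreenG α k x ρ * PhiG α k ρ)
        (fun ρ : ℝ => (1 + α)⁻¹ * PhiG α k x * (FG α k ρ * PhiG α k ρ)) (Set.Ioo 0 x) from
        fun ρ hρ => by simp only [GreenG, if_pos hρ.2]; ring),
      integral_const_mul]
  · rw [setIntegral_congr_fun measurableSet_Ici
      (show Set.EqOn (fun ρ : ℝ => GreenG α k x ρ * PhiG α k ρ)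
        (fun ρ : ℝ => (1 + α)⁻¹ * FG α k x * PhiG α k ρ ^ 2) (Set.Ici x) from
        fun ρ hρ => by simp only [GreenG]; rw [if_neg (not_lt.mpr (Set.mem_Ici.mp hρ))]; ring),
      integral_const_mul]

end PsiGAux

/-- For `α ∈ (0,1)` and nonzero `k`, the integral defining `Ψ_{α,k}`
converges for every `x > 0` and, as `x → 0⁺`,
`Ψ_{α,k}(x) = √(2|k|/(π(1+α)³)) ‖Φ_{α,k}‖²_{L²} x^{1+α/2} + o(x^{3/2})`. -/
theorem PsiG_short_distance_asymptotics (α : ℝ) (hα0 : 0 < α) (hα1 : α < 1)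
    (k : ℤ) (hk : k ≠ 0) :
    (∀ x : ℝ, 0 < x →
      IntegrableOn (fun ρ : ℝ => GreenG α k x ρ * PhiG α k ρ) (Set.Ioi 0)) ∧
    (fun x : ℝ =>
        PsiG α k x -
          Real.sqrt (2 * |(k : ℝ)| / (Real.pi * (1 + α) ^ 3)) *
            (∫ ρ in Set.Ioi (0 : ℝ), PhiG α k ρ ^ 2) * x ^ (1 + α / 2))
      =o[𝓝[>] 0] fun x : ℝ => x ^ ((3 : ℝ) / 2) := by
  have hkr : (0:ℝ) < |(k:ℝ)| := abs_pos.mpr (Int.cast_ne_zero.mpr hk)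
  have h1α : (0:ℝ) < 1 + α := by linarith
  have hπ := Real.pi_pos
  refine ⟨fun x hx => PsiGAux.integrableOn_green hα0 hα1 hk hx, ?_⟩
  set J := ∫ ρ in Set.Ioi (0:ℝ), PhiG α k ρ ^ 2 with hJ
  set K := Real.sqrt (2 * |(k:ℝ)| / (Real.pi * (1 + α) ^ 3)) with hK
  have hB0 : (0:ℝ) ≤ 2 * (1 + α) / (Real.pi * |(k:ℝ)|) := by positivity
  have hKeq : K = (1 + α)⁻¹ * Real.sqrt (2 * (1 + α) / (Real.pi * |(k:ℝ)|)) *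
      (|(k:ℝ)| / (1 + α)) := by
    have hsq : ((1 + α)⁻¹ * Real.sqrt (2 * (1 + α) / (Real.pi * |(k:ℝ)|)) *
        (|(k:ℝ)| / (1 + α))) ^ 2 = 2 * |(k:ℝ)| / (Real.pi * (1 + α) ^ 3) := by
      rw [mul_pow, mul_pow, Real.sq_sqrt hB0]
      field_simp
    rw [hK, ← hsq, Real.sqrt_sq (by positivity)]
  -- the smallness threshold
  set δ : ℝ := min 1 (((1 + α) / |(k:ℝ)|) ^ ((1 + α)⁻¹)) with hδ
  have hδ0 : 0 < δ := lt_min zero_lt_one (Real.rpow_pos_of_pos (by positivity) _)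
  have hδ1 : δ ≤ 1 := min_le_left _ _
  have hδt : ∀ y : ℝ, 0 < y → y ≤ δ → |(k:ℝ)| * y ^ (1 + α) / (1 + α) ≤ 1 := by
    intro y hy hyδ
    have h1 : y ^ (1 + α) ≤ (1 + α) / |(k:ℝ)| := by
      calc y ^ (1 + α) ≤ (((1 + α) / |(k:ℝ)|) ^ ((1 + α)⁻¹)) ^ (1 + α) :=
            Real.rpow_le_rpow hy.le (hyδ.trans (min_le_right _ _)) h1α.le
        _ = (1 + α) / |(k:ℝ)| := Real.rpow_inv_rpow (by positivity) h1α.ne'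
    rw [div_le_one h1α]
    calc |(k:ℝ)| * y ^ (1 + α) ≤ |(k:ℝ)| * ((1 + α) / |(k:ℝ)|) :=
          mul_le_mul_of_nonneg_left h1 (abs_nonneg _)
      _ = 1 + α := by field_simp
  obtain ⟨M, hM⟩ : ∃ M : ℝ, ∀ y : ℝ, 0 < y → y ≤ δ →
      |PsiG α k y - K * J * y ^ (1 + α / 2)| ≤ M * y ^ (2 - α / 2) := by
    refine ⟨(1 + α)⁻¹ * Real.sqrt (Real.pi * (1 + α) / (2 * |(k:ℝ)|))
      + (1 + α)⁻¹ * Real.sqrt (2 * (1 + α) / (Real.pi * |(k:ℝ)|)) * 2 * (|(k:ℝ)| / (1 + α)) *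
          ((Real.pi * (1 + α) / (2 * |(k:ℝ)|)) / (1 - α))
      + (1 + α)⁻¹ * Real.sqrt (2 * (1 + α) / (Real.pi * |(k:ℝ)|)) * (|(k:ℝ)| / (1 + α)) ^ 3 *
          |J|, ?_⟩
    intro y hy hyδ
    have hy1 : y ≤ 1 := hyδ.trans hδ1
    have hrp : (0:ℝ) ≤ y ^ (1 + α) := Real.rpow_nonneg hy.le _
    have ht0 : (0:ℝ) ≤ |(k:ℝ)| * y ^ (1 + α) / (1 + α) := by positivity
    have ht1 : |(k:ℝ)| * y ^ (1 + α) / (1 + α) ≤ 1 := hδt y hy hyδ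
    have hI2split : J = (∫ ρ in Set.Ioo 0 y, PhiG α k ρ ^ 2)
        + ∫ ρ in Set.Ici y, PhiG α k ρ ^ 2 := by
      have hu := setIntegral_union (μ := volume) (f := fun ρ : ℝ => PhiG α k ρ ^ 2)
        (Set.disjoint_left.mpr fun a ha hb => absurd ha.2 (not_lt.mpr hb)) measurableSet_Ici
        ((PsiGAux.integrableOn_phiG_sq hα0 hα1 hk).mono_set Set.Ioo_subset_Ioi_self)
        ((PsiGAux.integrableOn_phiG_sq hα0 hα1 hk).mono_set (Set.Ici_subset_Ioi.mpr hy))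
      rw [hJ, show Set.Ioi (0:ℝ) = Set.Ioo 0 y ∪ Set.Ici y from
          (Set.Ioo_union_Ici_eq_Ioi hy).symm]
      exact hu
    have herr : PsiG α k y - K * J * y ^ (1 + α / 2)
        = (1 + α)⁻¹ * PhiG α k y * (∫ ρ in Set.Ioo 0 y, FG α k ρ * PhiG α k ρ)
          + (-((1 + α)⁻¹ * FG α k y * (∫ ρ in Set.Ioo 0 y, PhiG α k ρ ^ 2)))
          + ((1 + α)⁻¹ * FG α k y - K * y ^ (1 + α / 2)) * J := by
      rw [PsiGAux.psiG_split hα0 hα1 hk hy,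
        show (∫ ρ in Set.Ici y, PhiG α k ρ ^ 2)
            = J - ∫ ρ in Set.Ioo 0 y, PhiG α k ρ ^ 2 from by rw [hI2split]; ring]
      ring
    have hyy2 : y ^ (-(α / 2)) * (y * y) = y ^ (2 - α / 2) := by
      rw [show y * y = y ^ ((2:ℕ):ℝ) from by rw [Real.rpow_natCast]; ring,
        ← Real.rpow_add hy]
      congr 1
      push_cast
      ring
    -- term 1
    have hI1 : |∫ ρ in Set.Ioo 0 y, FG α k ρ * PhiG α k ρ| ≤ y * y := by
      have hb := norm_setIntegral_le_of_norm_le_const (μ := volume) (s := Set.Ioo 0 y)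
        (C := y) (f := fun ρ => FG α k ρ * PhiG α k ρ) measure_Ioo_lt_top
        (fun ρ hρ => by
          rw [Real.norm_eq_abs, abs_of_nonneg (PsiGAux.FPhi_nonneg hα0 hρ.1)]
          exact (PsiGAux.FPhi_le hα0 hk hρ.1).trans hρ.2.le)
      rw [Real.norm_eq_abs] at hb
      calc |∫ ρ in Set.Ioo 0 y, FG α k ρ * PhiG α k ρ|
          ≤ y * (volume (Set.Ioo (0:ℝ) y)).toReal := hb
        _ = y * y := by rw [Real.volume_Ioo, sub_zero, ENNReal.toReal_ofReal hy.le]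
    have hT1 : |(1 + α)⁻¹ * PhiG α k y * (∫ ρ in Set.Ioo 0 y, FG α k ρ * PhiG α k ρ)|
        ≤ (1 + α)⁻¹ * Real.sqrt (Real.pi * (1 + α) / (2 * |(k:ℝ)|)) * y ^ (2 - α / 2) := by
      rw [abs_mul, abs_mul, abs_of_nonneg (by positivity : (0:ℝ) ≤ (1 + α)⁻¹),
        abs_of_nonneg (PsiGAux.phiG_nonneg hα0 hy)]
      calc (1 + α)⁻¹ * PhiG α k y * |∫ ρ in Set.Ioo 0 y, FG α k ρ * PhiG α k ρ|
          ≤ (1 + α)⁻¹ * (Real.sqrt (Real.pi * (1 + α) / (2 * |(k:ℝ)|)) * y ^ (-(α / 2)))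
              * (y * y) := by
            apply mul_le_mul
              (mul_le_mul_of_nonneg_left (PsiGAux.phiG_le hα0 hy) (by positivity))
              hI1 (abs_nonneg _)
              (mul_nonneg (by positivity)
                (mul_nonneg (Real.sqrt_nonneg _) (Real.rpow_nonneg hy.le _)))
        _ = ((1 + α)⁻¹ * Real.sqrt (Real.pi * (1 + α) / (2 * |(k:ℝ)|)))
              * (y ^ (-(α / 2)) * (y * y)) := by ring
        _ = (1 + α)⁻¹ * Real.sqrt (Real.pi * (1 + α) / (2 * |(k:ℝ)|)) * y ^ (2 - α / 2) := by
            rw [hyy2]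
    -- term 2
    have hDnonneg : 0 ≤ ∫ ρ in Set.Ioo 0 y, PhiG α k ρ ^ 2 :=
      setIntegral_nonneg measurableSet_Ioo fun ρ _ => sq_nonneg _
    have hD : (∫ ρ in Set.Ioo 0 y, PhiG α k ρ ^ 2)
        ≤ (Real.pi * (1 + α) / (2 * |(k:ℝ)|)) / (1 - α) * y ^ (1 - α) := by
      have hint1 : IntegrableOn (fun ρ : ℝ => PhiG α k ρ ^ 2) (Set.Ioo 0 y) :=
        (PsiGAux.integrableOn_phiG_sq hα0 hα1 hk).mono_set Set.Ioo_subset_Ioi_self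
      have hint2 : IntegrableOn
          (fun ρ : ℝ => (Real.pi * (1 + α) / (2 * |(k:ℝ)|)) * ρ ^ (-α)) (Set.Ioo 0 y) :=
        ((intervalIntegral.integrableOn_Ioo_rpow_iff hy).mpr (by linarith)).const_mul _
      have hmono := setIntegral_mono_on hint1 hint2 measurableSet_Ioo
        (fun ρ hρ => PsiGAux.phiG_sq_le hα0 hρ.1)
      have hval : (∫ ρ in Set.Ioo 0 y, (Real.pi * (1 + α) / (2 * |(k:ℝ)|)) * ρ ^ (-α))
          = (Real.pi * (1 + α) / (2 * |(k:ℝ)|)) * (y ^ (1 - α) / (1 - α)) := by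
        rw [integral_const_mul]
        congr 1
        rw [← integral_Ioc_eq_integral_Ioo, ← intervalIntegral.integral_of_le hy.le,
          integral_rpow (Or.inl (by linarith)),
          Real.zero_rpow (by intro hcon; linarith [hcon] : -α + 1 ≠ 0), sub_zero,
          show -α + 1 = 1 - α from by ring]
      calc (∫ ρ in Set.Ioo 0 y, PhiG α k ρ ^ 2)
          ≤ ∫ ρ in Set.Ioo 0 y, (Real.pi * (1 + α) / (2 * |(k:ℝ)|)) * ρ ^ (-α) := hmono
        _ = (Real.pi * (1 + α) / (2 * |(k:ℝ)|)) / (1 - α) * y ^ (1 - α) := by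
            rw [hval]; ring
    have hsinh2 : Real.sinh (|(k:ℝ)| * y ^ (1 + α) / (1 + α))
        ≤ 2 * (|(k:ℝ)| * y ^ (1 + α) / (1 + α)) := by
      have h := PsiGAux.abs_sinh_sub_le ht0 ht1
      have ha : (|(k:ℝ)| * y ^ (1 + α) / (1 + α)) * (|(k:ℝ)| * y ^ (1 + α) / (1 + α))
          ≤ 1 * 1 := mul_le_mul ht1 ht1 ht0 zero_le_one
      have ht3 : (|(k:ℝ)| * y ^ (1 + α) / (1 + α)) ^ 3
          ≤ |(k:ℝ)| * y ^ (1 + α) / (1 + α) := by nlinarith [ha]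
      have h2 := (abs_le.mp h).2
      linarith
    have hFG : FG α k y ≤ Real.sqrt (2 * (1 + α) / (Real.pi * |(k:ℝ)|)) * y ^ (-(α / 2)) *
        (2 * (|(k:ℝ)| * y ^ (1 + α) / (1 + α))) := by
      unfold FG
      exact mul_le_mul_of_nonneg_left hsinh2
        (mul_nonneg (Real.sqrt_nonneg _) (Real.rpow_nonneg hy.le _))
    have hFG0 : 0 ≤ FG α k y := PsiGAux.FG_nonneg hα0 hy
    have hyprod : y ^ (-(α / 2)) * y ^ (1 + α) * y ^ (1 - α) = y ^ (2 - α / 2) := by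
      rw [← Real.rpow_add hy, ← Real.rpow_add hy]
      congr 1
      ring
    have hT2 : |(-((1 + α)⁻¹ * FG α k y * (∫ ρ in Set.Ioo 0 y, PhiG α k ρ ^ 2)))|
        ≤ (1 + α)⁻¹ * Real.sqrt (2 * (1 + α) / (Real.pi * |(k:ℝ)|)) * 2 * (|(k:ℝ)| / (1 + α)) *
            ((Real.pi * (1 + α) / (2 * |(k:ℝ)|)) / (1 - α)) * y ^ (2 - α / 2) := by
      rw [abs_neg, abs_mul, abs_mul, abs_of_nonneg (by positivity : (0:ℝ) ≤ (1 + α)⁻¹),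
        abs_of_nonneg hFG0, abs_of_nonneg hDnonneg]
      calc (1 + α)⁻¹ * FG α k y * (∫ ρ in Set.Ioo 0 y, PhiG α k ρ ^ 2)
          ≤ (1 + α)⁻¹ * (Real.sqrt (2 * (1 + α) / (Real.pi * |(k:ℝ)|)) * y ^ (-(α / 2)) *
              (2 * (|(k:ℝ)| * y ^ (1 + α) / (1 + α)))) *
              ((Real.pi * (1 + α) / (2 * |(k:ℝ)|)) / (1 - α) * y ^ (1 - α)) := by
            apply mul_le_mul (mul_le_mul_of_nonneg_left hFG (by positivity)) hD hDnonneg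
            have h0 : (0:ℝ) ≤ Real.sqrt (2 * (1 + α) / (Real.pi * |(k:ℝ)|)) * y ^ (-(α / 2)) :=
              mul_nonneg (Real.sqrt_nonneg _) (Real.rpow_nonneg hy.le _)
            positivity
        _ = ((1 + α)⁻¹ * Real.sqrt (2 * (1 + α) / (Real.pi * |(k:ℝ)|)) * 2 * (|(k:ℝ)| / (1 + α)) *
              ((Real.pi * (1 + α) / (2 * |(k:ℝ)|)) / (1 - α))) *
              (y ^ (-(α / 2)) * y ^ (1 + α) * y ^ (1 - α)) := by ring
        _ = (1 + α)⁻¹ * Real.sqrt (2 * (1 + α) / (Real.pi * |(k:ℝ)|)) * 2 * (|(k:ℝ)| / (1 + α)) *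
              ((Real.pi * (1 + α) / (2 * |(k:ℝ)|)) / (1 - α)) * y ^ (2 - α / 2) := by
            rw [hyprod]
    -- term 3
    have hT3id : (1 + α)⁻¹ * FG α k y - K * y ^ (1 + α / 2)
        = (1 + α)⁻¹ * Real.sqrt (2 * (1 + α) / (Real.pi * |(k:ℝ)|)) * y ^ (-(α / 2)) *
          (Real.sinh (|(k:ℝ)| * y ^ (1 + α) / (1 + α)) - |(k:ℝ)| * y ^ (1 + α) / (1 + α)) := by
      rw [hKeq]
      unfold FG
      rw [show y ^ (1 + α / 2) = y ^ (-(α / 2)) * y ^ (1 + α) from by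
        rw [← Real.rpow_add hy]; congr 1; ring]
      ring
    have hpow3 : (y ^ (1 + α)) ^ (3:ℕ) = y ^ ((1 + α) * 3) := by
      rw [← Real.rpow_natCast (y ^ (1 + α)) 3, ← Real.rpow_mul hy.le]
      norm_num
    have hT3 : |((1 + α)⁻¹ * FG α k y - K * y ^ (1 + α / 2)) * J|
        ≤ (1 + α)⁻¹ * Real.sqrt (2 * (1 + α) / (Real.pi * |(k:ℝ)|)) * (|(k:ℝ)| / (1 + α)) ^ 3 *
            |J| * y ^ (2 - α / 2) := by
      rw [hT3id, abs_mul, abs_mul,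
        abs_of_nonneg (show (0:ℝ) ≤ (1 + α)⁻¹ * Real.sqrt (2 * (1 + α) / (Real.pi * |(k:ℝ)|)) *
            y ^ (-(α / 2)) from mul_nonneg (by positivity) (Real.rpow_nonneg hy.le _))]
      calc (1 + α)⁻¹ * Real.sqrt (2 * (1 + α) / (Real.pi * |(k:ℝ)|)) * y ^ (-(α / 2)) *
            |Real.sinh (|(k:ℝ)| * y ^ (1 + α) / (1 + α)) - |(k:ℝ)| * y ^ (1 + α) / (1 + α)| * |J|
          ≤ (1 + α)⁻¹ * Real.sqrt (2 * (1 + α) / (Real.pi * |(k:ℝ)|)) * y ^ (-(α / 2)) *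
              ((|(k:ℝ)| * y ^ (1 + α) / (1 + α)) ^ 3) * |J| := by
            apply mul_le_mul_of_nonneg_right
              (mul_le_mul_of_nonneg_left (PsiGAux.abs_sinh_sub_le ht0 ht1)
                (mul_nonneg (by positivity) (Real.rpow_nonneg hy.le _)))
              (abs_nonneg _)
        _ = ((1 + α)⁻¹ * Real.sqrt (2 * (1 + α) / (Real.pi * |(k:ℝ)|)) * (|(k:ℝ)| / (1 + α)) ^ 3 *
              |J|) * (y ^ (-(α / 2)) * (y ^ (1 + α)) ^ (3:ℕ)) := by ring
        _ = ((1 + α)⁻¹ * Real.sqrt (2 * (1 + α) / (Real.pi * |(k:ℝ)|)) * (|(k:ℝ)| / (1 + α)) ^ 3 *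
              |J|) * y ^ (-(α / 2) + (1 + α) * 3) := by
            rw [hpow3, ← Real.rpow_add hy]
        _ ≤ ((1 + α)⁻¹ * Real.sqrt (2 * (1 + α) / (Real.pi * |(k:ℝ)|)) * (|(k:ℝ)| / (1 + α)) ^ 3 *
              |J|) * y ^ (2 - α / 2) := by
            apply mul_le_mul_of_nonneg_left
              (Real.rpow_le_rpow_of_exponent_ge hy hy1 (by linarith)) (by positivity)
        _ = (1 + α)⁻¹ * Real.sqrt (2 * (1 + α) / (Real.pi * |(k:ℝ)|)) * (|(k:ℝ)| / (1 + α)) ^ 3 *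
              |J| * y ^ (2 - α / 2) := by ring
    rw [herr]
    refine le_trans (abs_add_le _ _) ?_
    refine le_trans (add_le_add_left (abs_add_le _ _) _) ?_
    rw [add_mul, add_mul]
    exact add_le_add (add_le_add hT1 hT2) hT3
  -- conclude
  have hbigO : (fun x : ℝ => PsiG α k x - K * J * x ^ (1 + α / 2))
      =O[𝓝[>] 0] fun x : ℝ => x ^ (2 - α / 2) := by
    rw [Asymptotics.isBigO_iff]
    refine ⟨M, ?_⟩
    filter_upwards [Ioo_mem_nhdsGT_of_mem (Set.mem_Ico.mpr ⟨le_refl (0:ℝ), hδ0⟩)] with y hy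
    rw [Real.norm_eq_abs, Real.norm_eq_abs, abs_of_nonneg (Real.rpow_nonneg hy.1.le _)]
    exact hM y hy.1 hy.2.le
  have hlittle : (fun x : ℝ => x ^ (2 - α / 2)) =o[𝓝[>] 0] fun x : ℝ => x ^ ((3:ℝ) / 2) := by
    rw [Asymptotics.isLittleO_iff]
    intro ε hε
    have hd : Tendsto (fun x : ℝ => x ^ ((1 - α) / 2)) (𝓝[>] 0) (𝓝 0) := by
      have hc := (Real.continuousAt_rpow_const 0 ((1 - α) / 2)
        (Or.inr (by linarith))).continuousWithinAt (s := Set.Ioi (0:ℝ))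
      have hne : ((1 - α) / 2) ≠ 0 := ne_of_gt (by linarith)
      simpa [ContinuousWithinAt, Real.zero_rpow hne] using hc
    filter_upwards [hd.eventually_lt_const hε, self_mem_nhdsWithin] with y h1 h2
    have hy : (0:ℝ) < y := h2
    rw [Real.norm_eq_abs, Real.norm_eq_abs, abs_of_nonneg (Real.rpow_nonneg hy.le _),
      abs_of_nonneg (Real.rpow_nonneg hy.le _)]
    calc y ^ (2 - α / 2) = y ^ ((1 - α) / 2) * y ^ ((3:ℝ) / 2) := by
          rw [← Real.rpow_add hy]; congr 1; ring
      _ ≤ ε * y ^ ((3:ℝ) / 2) :=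
          mul_le_mul_of_nonneg_right h1.le (Real.rpow_nonneg hy.le _)
  exact hbigO.trans_isLittleO hlittle
end

section
/- Let α ∈ (0,1), let k be a nonzero integer, and let h : (0,∞) → ℂ be measurable and square integrable. Define b₀(x) = (1+α)^{−1} ∫₀ˣ F_{α,k}(ρ)·h(ρ) dρ and b∞(x) = −(1+α)^{−1} ∫₀ˣ Φ_{α,k}(ρ)·h(ρ) dρ for x > 0. Then b₀(x) → 0 and b∞(x) → 0 as x → 0⁺, and moreover b∞(x)·F_{α,k}(x) + b₀(x)·Φ_{α,k}(x) = o(x^{3/2}) as x → 0⁺. -/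
open MeasureTheory Filter Topology Asymptotics

section Aux

open Set

lemma aux_sinh_le_mul_exp {t : ℝ} (ht : 0 ≤ t) : Real.sinh t ≤ t * Real.exp (2*t) := by
  rw [Real.sinh_eq]
  have h1 : Real.exp (-t) ≤ 1 := Real.exp_le_one_iff.mpr (by linarith)
  have h3 : (-(2*t)) + 1 ≤ Real.exp (-(2*t)) := Real.add_one_le_exp _
  have h4 : Real.exp (-(2*t)) * Real.exp (2*t) = 1 := by rw [← Real.exp_add]; simp
  have h6 : Real.exp t = Real.exp (-t) * Real.exp (2*t) := by
    rw [← Real.exp_add]; ring_nf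
  have he1 : 1 ≤ Real.exp (2*t) := Real.one_le_exp (by linarith)
  have he2 : 0 < Real.exp (2*t) := Real.exp_pos _
  have k1 : Real.exp t - Real.exp (-t) ≤ Real.exp (2*t) - 1 := by nlinarith [Real.exp_pos (-t)]
  have k2 : Real.exp (2*t) - 1 ≤ 2*t * Real.exp (2*t) := by nlinarith
  linarith

lemma aux_integral_Ioo_rpow {x r : ℝ} (hx : 0 ≤ x) (hr : -1 < r) :
    ∫ ρ in Ioo (0:ℝ) x, ρ ^ r = x ^ (r+1) / (r+1) := by
  rw [← integral_Ioc_eq_integral_Ioo, ← intervalIntegral.integral_of_le hx,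
    integral_rpow (Or.inl hr), Real.zero_rpow (by linarith), sub_zero]

lemma aux_integrableOn_Ioo_rpow {x r : ℝ} (hr : -1 < r) :
    IntegrableOn (fun ρ : ℝ => ρ ^ r) (Ioo (0:ℝ) x) :=
  ((intervalIntegral.intervalIntegrable_rpow' (a := 0) (b := x) hr).1).mono_set
    Ioo_subset_Ioc_self

lemma aux_sqrt_rpow {x : ℝ} (hx : 0 ≤ x) (y : ℝ) : Real.sqrt (x ^ y) = x ^ (y/2) := by
  rw [Real.sqrt_eq_rpow, ← Real.rpow_mul hx]
  congr 1; ring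

/-- Cauchy–Schwarz bound for `∫₀ˣ g·h` when `0 ≤ g ≤ M ρ^s` on `(0,x)`. -/
lemma aux_cs_bound {x : ℝ} (hx : 0 < x) {g : ℝ → ℝ} (hgm : Measurable g)
    (hg0 : ∀ ρ ∈ Ioo (0:ℝ) x, 0 ≤ g ρ) {M s : ℝ} (hM : 0 ≤ M) (hs : -1 < 2*s)
    (hgb : ∀ ρ ∈ Ioo (0:ℝ) x, g ρ ≤ M * ρ ^ s)
    {h : ℝ → ℂ} (hm : Measurable h) (hL2 : IntegrableOn (fun ρ => ‖h ρ‖^2) (Ioi 0)) :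
    ‖∫ ρ in Ioo (0:ℝ) x, (g ρ : ℂ) * h ρ‖ ≤
      M * Real.sqrt (x ^ (2*s+1) / (2*s+1)) * Real.sqrt (∫ ρ in Ioo (0:ℝ) x, ‖h ρ‖^2) := by
  have hIoo : MeasurableSet (Ioo (0:ℝ) x) := measurableSet_Ioo
  set μ := volume.restrict (Ioo (0:ℝ) x) with hμ
  have hmem : ∀ᵐ ρ ∂μ, ρ ∈ Ioo (0:ℝ) x := ae_restrict_mem hIoo
  have hg0' : 0 ≤ᵐ[μ] g := hmem.mono (fun ρ hρ => hg0 ρ hρ)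
  have hb_int : IntegrableOn (fun ρ : ℝ => M^2 * ρ ^ (2*s)) (Ioo (0:ℝ) x) :=
    (aux_integrableOn_Ioo_rpow hs).const_mul _
  have hgsq_bound : ∀ᵐ ρ ∂μ, ‖g ρ ^ 2‖ ≤ M^2 * ρ ^ (2*s) := by
    filter_upwards [hmem] with ρ hρ
    have h1 : 0 ≤ g ρ := hg0 ρ hρ
    have h2 : g ρ ≤ M * ρ ^ s := hgb ρ hρ
    have h3 : (ρ ^ s) * (ρ ^ s) = ρ ^ (2*s) := by
      rw [← Real.rpow_add hρ.1]; ring_nf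
    rw [Real.norm_of_nonneg (by positivity)]
    calc g ρ ^ 2 ≤ (M * ρ ^ s)^2 := by nlinarith [Real.rpow_nonneg hρ.1.le s]
      _ = M^2 * (ρ ^ s * ρ ^ s) := by ring
      _ = M^2 * ρ ^ (2*s) := by rw [h3]
  have hgsq : Integrable (fun ρ => g ρ ^ 2) μ :=
    Integrable.mono' hb_int ((hgm.pow_const 2).aestronglyMeasurable) hgsq_bound
  have hgL2 : MemLp g 2 μ := (memLp_two_iff_integrable_sq hgm.aestronglyMeasurable).mpr hgsq
  have hhsq : Integrable (fun ρ => ‖h ρ‖ ^ 2) μ := hL2.mono_set Ioo_subset_Ioi_self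
  have hhL2 : MemLp (fun ρ => ‖h ρ‖) 2 μ :=
    (memLp_two_iff_integrable_sq hm.norm.aestronglyMeasurable).mpr hhsq
  have hpq : (2:ℝ).HolderConjugate 2 := Real.HolderConjugate.two_two
  have hof : (ENNReal.ofReal (2:ℝ)) = 2 := by norm_num
  have CS := integral_mul_le_Lp_mul_Lq_of_nonneg (μ := μ) hpq hg0'
    (Filter.Eventually.of_forall (fun ρ => norm_nonneg _)) (hof ▸ hgL2) (hof ▸ hhL2)
  have e1 : ∀ y : ℝ → ℝ, (∫ ρ, y ρ ^ (2:ℝ) ∂μ) = ∫ ρ, y ρ ^ 2 ∂μ := by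
    intro y; refine integral_congr_ae (Filter.Eventually.of_forall fun ρ => ?_)
    show y ρ ^ (2:ℝ) = y ρ ^ (2:ℕ)
    rw [show (2:ℝ) = ((2:ℕ):ℝ) by norm_num, Real.rpow_natCast]
  rw [e1, e1] at CS
  have step1 : ‖∫ ρ in Ioo (0:ℝ) x, (g ρ : ℂ) * h ρ‖ ≤ ∫ ρ, g ρ * ‖h ρ‖ ∂μ := by
    refine (norm_integral_le_integral_norm _).trans (le_of_eq ?_)
    refine integral_congr_ae (hmem.mono fun ρ hρ => ?_)
    show ‖(g ρ : ℂ) * h ρ‖ = g ρ * ‖h ρ‖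
    rw [norm_mul, Complex.norm_real, Real.norm_of_nonneg (hg0 ρ hρ)]
  have step2 : (∫ ρ, g ρ ^ 2 ∂μ) ≤ M^2 * (x ^ (2*s+1) / (2*s+1)) := by
    calc (∫ ρ, g ρ ^ 2 ∂μ) ≤ ∫ ρ in Ioo (0:ℝ) x, M^2 * ρ ^ (2*s) := by
          refine setIntegral_mono_on hgsq hb_int hIoo fun ρ hρ => ?_
          have h1 : 0 ≤ g ρ := hg0 ρ hρ
          have h2 : g ρ ≤ M * ρ ^ s := hgb ρ hρ
          have h3 : (ρ ^ s) * (ρ ^ s) = ρ ^ (2*s) := by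
            rw [← Real.rpow_add hρ.1]; ring_nf
          nlinarith [Real.rpow_nonneg hρ.1.le s]
      _ = M^2 * (x ^ (2*s+1) / (2*s+1)) := by
          rw [integral_const_mul, aux_integral_Ioo_rpow hx.le hs]
  have hint_nonneg : 0 ≤ ∫ ρ, g ρ ^ 2 ∂μ := integral_nonneg (fun ρ => sq_nonneg _)
  have hh_nonneg : 0 ≤ ∫ ρ, ‖h ρ‖ ^ 2 ∂μ := integral_nonneg (fun ρ => sq_nonneg _)
  calc ‖∫ ρ in Ioo (0:ℝ) x, (g ρ : ℂ) * h ρ‖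
      ≤ (∫ ρ, g ρ ^ 2 ∂μ) ^ (1/(2:ℝ)) * (∫ ρ, ‖h ρ‖ ^ 2 ∂μ) ^ (1/(2:ℝ)) := step1.trans CS
    _ ≤ (M^2 * (x ^ (2*s+1) / (2*s+1))) ^ (1/(2:ℝ)) * (∫ ρ, ‖h ρ‖ ^ 2 ∂μ) ^ (1/(2:ℝ)) := by
        apply mul_le_mul_of_nonneg_right (Real.rpow_le_rpow hint_nonneg step2 (by norm_num))
        exact Real.rpow_nonneg hh_nonneg _
    _ = M * Real.sqrt (x ^ (2*s+1) / (2*s+1)) * Real.sqrt (∫ ρ in Ioo (0:ℝ) x, ‖h ρ‖^2) := by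
        rw [← Real.sqrt_eq_rpow, ← Real.sqrt_eq_rpow, Real.sqrt_mul (by positivity),
          Real.sqrt_sq hM]

/-- The tail `∫₀ˣ ‖h‖²` tends to `0` as `x → 0⁺`. -/
lemma aux_eps_tendsto {h : ℝ → ℂ} (hL2 : IntegrableOn (fun ρ => ‖h ρ‖^2) (Ioi 0)) :
    Tendsto (fun x : ℝ => ∫ ρ in Ioo (0:ℝ) x, ‖h ρ‖^2) (𝓝[>] (0:ℝ)) (𝓝 0) := by
  have hnn : ∀ x : ℝ, 0 ≤ ∫ ρ in Ioo (0:ℝ) x, ‖h ρ‖^2 := fun x =>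
    setIntegral_nonneg measurableSet_Ioo (fun ρ _ => sq_nonneg _)
  set s : ℕ → Set ℝ := fun n => Ioo 0 (1/(n+1)) with hs
  have hanti : Antitone s := fun m n hmn =>
    Ioo_subset_Ioo_right (by
      apply one_div_le_one_div_of_le (by positivity)
      exact_mod_cast by exact_mod_cast Nat.add_le_add_right hmn 1)
  have h0 : (⋂ n, s n) = ∅ := by
    ext y; simp only [Set.mem_iInter, Set.mem_empty_iff_false, iff_false]
    intro hy
    obtain ⟨n, hn⟩ := exists_nat_one_div_lt (hy 0).1
    exact absurd (hy n).2 (not_lt.mpr hn.le)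
  have hseq : Tendsto (fun n => ∫ ρ in s n, ‖h ρ‖^2) atTop (𝓝 0) := by
    have := tendsto_setIntegral_of_antitone (f := fun ρ => ‖h ρ‖^2) (μ := volume)
      (fun n => measurableSet_Ioo) hanti ⟨0, hL2.mono_set Ioo_subset_Ioi_self⟩
    rwa [h0, setIntegral_empty] at this
  rw [Metric.tendsto_nhdsWithin_nhds]
  intro c hc
  obtain ⟨n, hn⟩ := (hseq.eventually (gt_mem_nhds hc)).exists
  refine ⟨1/(n+1), by positivity, fun {x} hx hd => ?_⟩
  rw [Real.dist_eq, sub_zero] at hd ⊢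
  have hx0 : (0:ℝ) < x := hx
  have hxs : x < 1/(n+1) := by rwa [abs_of_pos hx0] at hd
  have hsub : Ioo (0:ℝ) x ⊆ s n := Ioo_subset_Ioo_right hxs.le
  have hmono : (∫ ρ in Ioo (0:ℝ) x, ‖h ρ‖^2) ≤ ∫ ρ in s n, ‖h ρ‖^2 := by
    refine setIntegral_mono_set (hL2.mono_set Ioo_subset_Ioi_self)
      (Filter.Eventually.of_forall fun ρ => sq_nonneg _) (HasSubset.Subset.eventuallyLE hsub)
  rw [abs_of_nonneg (hnn x)]
  exact lt_of_le_of_lt hmono hn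

end Aux

set_option maxHeartbeats 1000000 in
/-- Let `α ∈ (0,1)`, `k ≠ 0`, and let `h : (0,∞) → ℂ` be measurable and
square integrable.  With `b₀(x) = (1+α)⁻¹ ∫₀ˣ F_{α,k} h` and `b∞(x) = −(1+α)⁻¹ ∫₀ˣ Φ_{α,k} h`
one has `b₀(x) → 0`, `b∞(x) → 0` as `x → 0⁺`, and
`b∞(x) F_{α,k}(x) + b₀(x) Φ_{α,k}(x) = o(x^{3/2})` as `x → 0⁺`. -/
theorem boundary_coefficients_vanish (α : ℝ) (hα0 : 0 < α) (hα1 : α < 1)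
    (k : ℤ) (hk : k ≠ 0) (h : ℝ → ℂ) (hm : Measurable h)
    (hL2 : IntegrableOn (fun x : ℝ => ‖h x‖ ^ 2) (Set.Ioi 0)) :
    Tendsto (fun x : ℝ =>
        ((1 + α)⁻¹ : ℂ) * ∫ ρ in Set.Ioo (0 : ℝ) x, (FG α k ρ : ℂ) * h ρ)
      (𝓝[>] 0) (𝓝 0) ∧
    Tendsto (fun x : ℝ =>
        -((1 + α)⁻¹ : ℂ) * ∫ ρ in Set.Ioo (0 : ℝ) x, (PhiG α k ρ : ℂ) * h ρ)
      (𝓝[>] 0) (𝓝 0) ∧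
    (fun x : ℝ =>
        (-((1 + α)⁻¹ : ℂ) * ∫ ρ in Set.Ioo (0 : ℝ) x, (PhiG α k ρ : ℂ) * h ρ) *
            (FG α k x : ℂ) +
          (((1 + α)⁻¹ : ℂ) * ∫ ρ in Set.Ioo (0 : ℝ) x, (FG α k ρ : ℂ) * h ρ) *
            (PhiG α k x : ℂ))
      =o[𝓝[>] 0] fun x : ℝ => x ^ ((3 : ℝ) / 2) := by
  have a1 : (0:ℝ) < 1 + α := by linarith
  have hK : (0:ℝ) < |(k:ℝ)| := abs_pos.mpr (by exact_mod_cast hk)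
  set K : ℝ := |(k:ℝ)| with hKdef
  set A : ℝ := Real.sqrt (Real.pi * (1 + α) / (2 * K)) with hAdef
  set B : ℝ := Real.sqrt (2 * (1 + α) / (Real.pi * K)) * (K/(1+α)) *
    Real.exp (2*(K/(1+α))) with hBdef
  have hA : 0 ≤ A := Real.sqrt_nonneg _
  have hB : 0 ≤ B := by positivity
  -- pointwise bounds
  have hPhi0 : ∀ ρ : ℝ, 0 < ρ → 0 ≤ PhiG α k ρ := by
    intro ρ hρ; unfold PhiG; positivity
  have hPhiB : ∀ ρ : ℝ, 0 < ρ → PhiG α k ρ ≤ A * ρ ^ (-(α/2)) := by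
    intro ρ hρ; unfold PhiG
    have h1 : Real.exp (-(K * ρ ^ (1 + α) / (1 + α))) ≤ 1 := by
      apply Real.exp_le_one_iff.mpr
      have : 0 ≤ K * ρ ^ (1 + α) / (1 + α) := by positivity
      linarith
    have h2 : (0:ℝ) ≤ A * ρ ^ (-(α/2)) := by positivity
    calc A * ρ ^ (-(α/2)) * Real.exp (-(K * ρ ^ (1 + α) / (1 + α)))
        ≤ A * ρ ^ (-(α/2)) * 1 := mul_le_mul_of_nonneg_left h1 h2
      _ = A * ρ ^ (-(α/2)) := by ring
  have hFG0 : ∀ ρ : ℝ, 0 < ρ → 0 ≤ FG α k ρ := by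
    intro ρ hρ; unfold FG; positivity
  have hFGB : ∀ ρ : ℝ, 0 < ρ → ρ ≤ 1 → FG α k ρ ≤ B * ρ ^ (1 + α/2) := by
    intro ρ hρ hρ1
    unfold FG
    set S : ℝ := Real.sqrt (2 * (1 + α) / (Real.pi * K)) with hSdef
    have hS : 0 ≤ S := Real.sqrt_nonneg _
    set t : ℝ := K * ρ ^ (1 + α) / (1 + α) with htdef
    have ht0 : 0 ≤ t := by positivity
    have hρp1 : ρ ^ (1 + α) ≤ 1 := Real.rpow_le_one hρ.le hρ1 (by linarith)
    have htc : t ≤ K/(1+α) := by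
      rw [htdef, div_le_div_iff_of_pos_right a1]
      nlinarith
    have hsinh : Real.sinh t ≤ t * Real.exp (2*(K/(1+α))) := by
      refine (aux_sinh_le_mul_exp ht0).trans ?_
      have := Real.exp_le_exp.mpr (by linarith : 2*t ≤ 2*(K/(1+α)))
      exact mul_le_mul_of_nonneg_left this ht0
    have hρpow : ρ ^ (-(α/2)) * ρ ^ (1 + α) = ρ ^ (1 + α/2) := by
      rw [← Real.rpow_add hρ]; congr 1; ring
    have hρnn : (0:ℝ) ≤ ρ ^ (-(α/2)) := by positivity
    calc S * ρ ^ (-(α/2)) * Real.sinh t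
        ≤ S * ρ ^ (-(α/2)) * (t * Real.exp (2*(K/(1+α)))) := by
          exact mul_le_mul_of_nonneg_left hsinh (by positivity)
      _ = (S * (K/(1+α)) * Real.exp (2*(K/(1+α)))) * (ρ ^ (-(α/2)) * ρ ^ (1 + α)) := by
          rw [htdef]; ring
      _ = B * ρ ^ (1 + α/2) := by rw [hρpow]
  -- measurability
  have hPhiM : Measurable (PhiG α k) := by unfold PhiG; fun_prop
  have hFGM : Measurable (FG α k) := by unfold FG; fun_prop
  -- the tail of the L² norm
  have hεnn : ∀ x : ℝ, 0 ≤ ∫ ρ in Set.Ioo (0:ℝ) x, ‖h ρ‖^2 := fun x =>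
    setIntegral_nonneg measurableSet_Ioo (fun ρ _ => sq_nonneg _)
  have hεt := aux_eps_tendsto hL2
  have hsqεt : Tendsto (fun x : ℝ => Real.sqrt (∫ ρ in Set.Ioo (0:ℝ) x, ‖h ρ‖^2))
      (𝓝[>] (0:ℝ)) (𝓝 0) := by
    have := (Real.continuous_sqrt.tendsto 0).comp hεt
    simpa [Function.comp_def] using this
  -- Cauchy–Schwarz bounds
  have bndΦ : ∀ x : ℝ, 0 < x →
      ‖∫ ρ in Set.Ioo (0:ℝ) x, (PhiG α k ρ : ℂ) * h ρ‖ ≤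
        A * Real.sqrt (x ^ (1-α) / (1-α)) *
          Real.sqrt (∫ ρ in Set.Ioo (0:ℝ) x, ‖h ρ‖^2) := by
    intro x hx
    have hcs := aux_cs_bound hx hPhiM (fun ρ hρ => hPhi0 ρ hρ.1) hA
      (s := -(α/2)) (by linarith) (fun ρ hρ => hPhiB ρ hρ.1) hm hL2
    have e : 2*(-(α/2))+1 = 1-α := by ring
    rwa [e] at hcs
  have bndF : ∀ x : ℝ, 0 < x → x ≤ 1 →
      ‖∫ ρ in Set.Ioo (0:ℝ) x, (FG α k ρ : ℂ) * h ρ‖ ≤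
        B * Real.sqrt (x ^ (3+α) / (3+α)) *
          Real.sqrt (∫ ρ in Set.Ioo (0:ℝ) x, ‖h ρ‖^2) := by
    intro x hx hx1
    have hcs := aux_cs_bound hx hFGM (fun ρ hρ => hFG0 ρ hρ.1) hB
      (s := 1+α/2) (by linarith) (fun ρ hρ => hFGB ρ hρ.1 (le_of_lt (lt_of_lt_of_le hρ.2 hx1)))
      hm hL2
    have e : 2*(1+α/2)+1 = 3+α := by ring
    rwa [e] at hcs
  -- norm of the constant
  have hcn : ‖((1 + α)⁻¹ : ℂ)‖ = (1+α)⁻¹ := by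
    have : ((1 + α)⁻¹ : ℂ) = (((1+α)⁻¹ : ℝ) : ℂ) := by push_cast; ring
    rw [this, Complex.norm_real, Real.norm_of_nonneg (by positivity)]
  have hIoo1 : Set.Ioo (0:ℝ) 1 ∈ 𝓝[>] (0:ℝ) :=
    Ioo_mem_nhdsGT_of_mem ⟨le_refl 0, zero_lt_one⟩
  refine ⟨?_, ?_, ?_⟩
  · -- b₀ → 0
    apply squeeze_zero_norm' (a := fun x : ℝ =>
      ((1+α)⁻¹ * (B * Real.sqrt (1 / (3+α)))) *
        Real.sqrt (∫ ρ in Set.Ioo (0:ℝ) x, ‖h ρ‖^2))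
    · filter_upwards [hIoo1] with x hx
      rw [norm_mul, hcn]
      have hb := bndF x hx.1 hx.2.le
      have hmono : Real.sqrt (x ^ (3+α) / (3+α)) ≤ Real.sqrt (1 / (3+α)) := by
        apply Real.sqrt_le_sqrt
        apply div_le_div_of_nonneg_right _ (by linarith)
        · exact Real.rpow_le_one hx.1.le hx.2.le (by linarith)
      calc (1+α)⁻¹ * ‖∫ ρ in Set.Ioo (0:ℝ) x, (FG α k ρ : ℂ) * h ρ‖
          ≤ (1+α)⁻¹ * (B * Real.sqrt (x ^ (3+α) / (3+α)) *
              Real.sqrt (∫ ρ in Set.Ioo (0:ℝ) x, ‖h ρ‖^2)) := by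
            exact mul_le_mul_of_nonneg_left hb (by positivity)
        _ ≤ (1+α)⁻¹ * (B * Real.sqrt (1 / (3+α)) *
              Real.sqrt (∫ ρ in Set.Ioo (0:ℝ) x, ‖h ρ‖^2)) := by
            refine mul_le_mul_of_nonneg_left (mul_le_mul_of_nonneg_right
              (mul_le_mul_of_nonneg_left hmono hB) (Real.sqrt_nonneg _)) (by positivity)
        _ = ((1+α)⁻¹ * (B * Real.sqrt (1 / (3+α)))) *
              Real.sqrt (∫ ρ in Set.Ioo (0:ℝ) x, ‖h ρ‖^2) := by ring
    · have := hsqεt.const_mul ((1+α)⁻¹ * (B * Real.sqrt (1 / (3+α))))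
      simpa using this
  · -- b∞ → 0
    apply squeeze_zero_norm' (a := fun x : ℝ =>
      ((1+α)⁻¹ * (A * Real.sqrt (1 / (1-α)))) *
        Real.sqrt (∫ ρ in Set.Ioo (0:ℝ) x, ‖h ρ‖^2))
    · filter_upwards [hIoo1] with x hx
      rw [norm_mul, norm_neg, hcn]
      have hb := bndΦ x hx.1
      have hmono : Real.sqrt (x ^ (1-α) / (1-α)) ≤ Real.sqrt (1 / (1-α)) := by
        apply Real.sqrt_le_sqrt
        apply div_le_div_of_nonneg_right _ (by linarith)
        · exact Real.rpow_le_one hx.1.le hx.2.le (by linarith)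
      calc (1+α)⁻¹ * ‖∫ ρ in Set.Ioo (0:ℝ) x, (PhiG α k ρ : ℂ) * h ρ‖
          ≤ (1+α)⁻¹ * (A * Real.sqrt (x ^ (1-α) / (1-α)) *
              Real.sqrt (∫ ρ in Set.Ioo (0:ℝ) x, ‖h ρ‖^2)) := by
            exact mul_le_mul_of_nonneg_left hb (by positivity)
        _ ≤ (1+α)⁻¹ * (A * Real.sqrt (1 / (1-α)) *
              Real.sqrt (∫ ρ in Set.Ioo (0:ℝ) x, ‖h ρ‖^2)) := by
            refine mul_le_mul_of_nonneg_left (mul_le_mul_of_nonneg_right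
              (mul_le_mul_of_nonneg_left hmono hA) (Real.sqrt_nonneg _)) (by positivity)
        _ = ((1+α)⁻¹ * (A * Real.sqrt (1 / (1-α)))) *
              Real.sqrt (∫ ρ in Set.Ioo (0:ℝ) x, ‖h ρ‖^2) := by ring
    · have := hsqεt.const_mul ((1+α)⁻¹ * (A * Real.sqrt (1 / (1-α))))
      simpa using this
  · -- little-o
    set D : ℝ := (1+α)⁻¹ * (A * B / Real.sqrt (1-α)) +
      (1+α)⁻¹ * (A * B / Real.sqrt (3+α)) with hDdef
    have hD : 0 ≤ D := by positivity
    have key : ∀ x ∈ Set.Ioo (0:ℝ) 1,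
        ‖(-((1 + α)⁻¹ : ℂ) * ∫ ρ in Set.Ioo (0 : ℝ) x, (PhiG α k ρ : ℂ) * h ρ) *
              (FG α k x : ℂ) +
            (((1 + α)⁻¹ : ℂ) * ∫ ρ in Set.Ioo (0 : ℝ) x, (FG α k ρ : ℂ) * h ρ) *
              (PhiG α k x : ℂ)‖ ≤
          D * Real.sqrt (∫ ρ in Set.Ioo (0:ℝ) x, ‖h ρ‖^2) * x ^ ((3:ℝ)/2) := by
      intro x hx
      have hx0 : (0:ℝ) < x := hx.1
      have hsq1 : Real.sqrt (x ^ (1-α) / (1-α)) =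
          x ^ ((1-α)/2) / Real.sqrt (1-α) := by
        rw [Real.sqrt_div (by positivity), aux_sqrt_rpow hx0.le]
      have hsq2 : Real.sqrt (x ^ (3+α) / (3+α)) =
          x ^ ((3+α)/2) / Real.sqrt (3+α) := by
        rw [Real.sqrt_div (by positivity), aux_sqrt_rpow hx0.le]
      have hxpow1 : x ^ ((1-α)/2) * x ^ (1 + α/2) = x ^ ((3:ℝ)/2) := by
        rw [← Real.rpow_add hx0]; congr 1; ring
      have hxpow2 : x ^ ((3+α)/2) * x ^ (-(α/2)) = x ^ ((3:ℝ)/2) := by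
        rw [← Real.rpow_add hx0]; congr 1; ring
      set ε : ℝ := ∫ ρ in Set.Ioo (0:ℝ) x, ‖h ρ‖^2 with hεdef
      have hεnn' : 0 ≤ ε := hεnn x
      have t1 : ‖(-((1 + α)⁻¹ : ℂ) * ∫ ρ in Set.Ioo (0 : ℝ) x, (PhiG α k ρ : ℂ) * h ρ) *
            (FG α k x : ℂ)‖ ≤
          ((1+α)⁻¹ * (A * B / Real.sqrt (1-α))) * Real.sqrt ε * x ^ ((3:ℝ)/2) := by
        rw [norm_mul, norm_mul, norm_neg, hcn, Complex.norm_real,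
          Real.norm_of_nonneg (hFG0 x hx0)]
        have h1 := bndΦ x hx0
        rw [hsq1] at h1
        have h2 := hFGB x hx0 hx.2.le
        calc (1+α)⁻¹ * ‖∫ ρ in Set.Ioo (0 : ℝ) x, (PhiG α k ρ : ℂ) * h ρ‖ * FG α k x
            ≤ (1+α)⁻¹ * (A * (x ^ ((1-α)/2) / Real.sqrt (1-α)) * Real.sqrt ε) *
                (B * x ^ (1 + α/2)) := by
              apply mul_le_mul (mul_le_mul_of_nonneg_left h1 (by positivity)) h2
                (hFG0 x hx0) (by positivity)
          _ = ((1+α)⁻¹ * (A * B / Real.sqrt (1-α))) * Real.sqrt ε *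
                (x ^ ((1-α)/2) * x ^ (1 + α/2)) := by ring
          _ = ((1+α)⁻¹ * (A * B / Real.sqrt (1-α))) * Real.sqrt ε * x ^ ((3:ℝ)/2) := by
              rw [hxpow1]
      have t2 : ‖(((1 + α)⁻¹ : ℂ) * ∫ ρ in Set.Ioo (0 : ℝ) x, (FG α k ρ : ℂ) * h ρ) *
            (PhiG α k x : ℂ)‖ ≤
          ((1+α)⁻¹ * (A * B / Real.sqrt (3+α))) * Real.sqrt ε * x ^ ((3:ℝ)/2) := by
        rw [norm_mul, norm_mul, hcn, Complex.norm_real,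
          Real.norm_of_nonneg (hPhi0 x hx0)]
        have h1 := bndF x hx0 hx.2.le
        rw [hsq2] at h1
        have h2 := hPhiB x hx0
        calc (1+α)⁻¹ * ‖∫ ρ in Set.Ioo (0 : ℝ) x, (FG α k ρ : ℂ) * h ρ‖ * PhiG α k x
            ≤ (1+α)⁻¹ * (B * (x ^ ((3+α)/2) / Real.sqrt (3+α)) * Real.sqrt ε) *
                (A * x ^ (-(α/2))) := by
              apply mul_le_mul (mul_le_mul_of_nonneg_left h1 (by positivity)) h2
                (hPhi0 x hx0) (by positivity)
          _ = ((1+α)⁻¹ * (A * B / Real.sqrt (3+α))) * Real.sqrt ε *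
                (x ^ ((3+α)/2) * x ^ (-(α/2))) := by ring
          _ = ((1+α)⁻¹ * (A * B / Real.sqrt (3+α))) * Real.sqrt ε * x ^ ((3:ℝ)/2) := by
              rw [hxpow2]
      refine (norm_add_le _ _).trans ((add_le_add t1 t2).trans (le_of_eq ?_))
      rw [hDdef]; ring
    rw [isLittleO_iff]
    intro c hc
    have hDt : Tendsto (fun x : ℝ => D * Real.sqrt (∫ ρ in Set.Ioo (0:ℝ) x, ‖h ρ‖^2))
        (𝓝[>] (0:ℝ)) (𝓝 0) := by
      have := hsqεt.const_mul D
      simpa using this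
    filter_upwards [hIoo1, hDt.eventually (gt_mem_nhds hc)] with x hx hDx
    have hx0 : (0:ℝ) < x := hx.1
    have hxp : (0:ℝ) ≤ x ^ ((3:ℝ)/2) := Real.rpow_nonneg hx0.le _
    calc ‖(-((1 + α)⁻¹ : ℂ) * ∫ ρ in Set.Ioo (0 : ℝ) x, (PhiG α k ρ : ℂ) * h ρ) *
              (FG α k x : ℂ) +
            (((1 + α)⁻¹ : ℂ) * ∫ ρ in Set.Ioo (0 : ℝ) x, (FG α k ρ : ℂ) * h ρ) *
              (PhiG α k x : ℂ)‖
        ≤ D * Real.sqrt (∫ ρ in Set.Ioo (0:ℝ) x, ‖h ρ‖^2) * x ^ ((3:ℝ)/2) := key x hx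
      _ ≤ c * x ^ ((3:ℝ)/2) := mul_le_mul_of_nonneg_right hDx.le hxp
      _ = c * ‖x ^ ((3:ℝ)/2)‖ := by rw [Real.norm_of_nonneg hxp]
end

section
/- Let α ∈ [0,1) and let r : (0,1) → ℂ be twice continuously differentiable with ∫₀¹ x^{−(3+α)}·|r(x)|² dx < ∞ and ∫₀¹ |r''(x)|² dx < ∞. Then r(x) = o(x^{3/2}) and r'(x) = o(x^{1/2}) as x → 0⁺. -/
open MeasureTheory Filter Topology Asymptotics

lemma cs_helper {f : ℝ → ℂ} {s : Set ℝ}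
    (hm : AEStronglyMeasurable f (volume.restrict s)) (hμ : volume s < ⊤)
    (hf2 : IntegrableOn (fun x => ‖f x‖ ^ 2) s) :
    ‖∫ x in s, f x‖ ≤ (∫ x in s, ‖f x‖ ^ 2) ^ ((1:ℝ)/2) * (volume s).toReal ^ ((1:ℝ)/2) := by
  haveI : IsFiniteMeasure (volume.restrict s) :=
    ⟨by rwa [Measure.restrict_apply_univ]⟩
  have hconj : Real.HolderConjugate 2 2 := Real.holderConjugate_iff.mpr ⟨one_lt_two, by norm_num⟩
  have hf : MemLp f 2 (volume.restrict s) :=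
    (memLp_two_iff_integrable_sq_norm hm).2 hf2
  have hg : MemLp (fun _ : ℝ => (1:ℂ)) 2 (volume.restrict s) := memLp_const 1
  have h2 : ENNReal.ofReal (2:ℝ) = 2 := by norm_num
  have h := MeasureTheory.integral_mul_norm_le_Lp_mul_Lq (μ := volume.restrict s)
    (f := f) (g := fun _ => (1:ℂ)) hconj (h2 ▸ hf) (h2 ▸ hg)
  simp only [Nat.cast_one, Nat.cast_ofNat, norm_one, mul_one, one_pow, Real.one_rpow] at h
  have hrw : ∀ a : ℝ, 0 ≤ a → a ^ (2:ℝ) = a ^ 2 := fun a ha => by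
    rw [show (2:ℝ) = ((2:ℕ):ℝ) by norm_num, Real.rpow_natCast]
  calc ‖∫ x in s, f x‖ ≤ ∫ x in s, ‖f x‖ := norm_integral_le_integral_norm f
    _ ≤ (∫ x in s, ‖f x‖ ^ (2:ℝ)) ^ (1/(2:ℝ)) * (∫ _x in s, (1:ℝ)) ^ (1/(2:ℝ)) := h
    _ = (∫ x in s, ‖f x‖ ^ 2) ^ ((1:ℝ)/2) * (volume s).toReal ^ ((1:ℝ)/2) := by
        congr 1
        · congr 1
          exact integral_congr_ae (Eventually.of_forall fun x => hrw _ (norm_nonneg _))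
        · congr 1
          simp [integral_const, Measure.restrict_apply_univ, Measure.real]

lemma not_integrable_aux {δ : ℝ} (hδ : 0 < δ) {p : ℝ} (hp : p ≤ -1) {c : ℝ} (hc : 0 < c)
    {w : ℝ → ℝ} (hw : IntegrableOn w (Set.Ioo 0 δ))
    (hle : ∀ x ∈ Set.Ioo (0:ℝ) δ, c * x ^ p ≤ w x) : False := by
  have hmeas : AEStronglyMeasurable (fun x : ℝ => c * x ^ p)
      (volume.restrict (Set.Ioo 0 δ)) := by
    apply ContinuousOn.aestronglyMeasurable _ measurableSet_Ioo
    exact ContinuousOn.const_smul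
      (continuousOn_id.rpow_const (fun x hx => Or.inl (ne_of_gt hx.1))) c
  have hint : IntegrableOn (fun x : ℝ => c * x ^ p) (Set.Ioo 0 δ) := by
    apply Integrable.mono' hw hmeas
    rw [ae_restrict_iff' measurableSet_Ioo]
    refine Eventually.of_forall (fun x hx => ?_)
    have hx0 : 0 < x := hx.1
    rw [Real.norm_of_nonneg (by positivity)]
    exact hle x hx
  have hfin : IntegrableOn (fun x : ℝ => x ^ p) (Set.Ioo 0 δ) := by
    have h' := hint.const_mul c⁻¹
    have : (fun x : ℝ => c⁻¹ * (c * x ^ p)) = fun x : ℝ => x ^ p := by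
      funext x; field_simp
    rwa [this] at h'
  rw [intervalIntegral.integrableOn_Ioo_rpow_iff hδ] at hfin
  linarith

/-- Let `α ∈ [0,1)` and let `r : (0,1) → ℂ` be twice continuously
differentiable with `∫₀¹ x^{−(3+α)} |r(x)|² dx < ∞` and `∫₀¹ |r''(x)|² dx < ∞`.  Then
`r(x) = o(x^{3/2})` and `r'(x) = o(x^{1/2})` as `x → 0⁺`. -/
theorem H2_weighted_vanishing_at_origin (α : ℝ) (hα0 : 0 ≤ α) (hα1 : α < 1)
    (r : ℝ → ℂ)
    (hd1 : ∀ x ∈ Set.Ioo (0 : ℝ) 1, DifferentiableAt ℝ r x)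
    (hd2 : ∀ x ∈ Set.Ioo (0 : ℝ) 1, DifferentiableAt ℝ (deriv r) x)
    (hd3 : ContinuousOn (deriv (deriv r)) (Set.Ioo (0 : ℝ) 1))
    (hw : IntegrableOn (fun x : ℝ => x ^ (-(3 + α)) * ‖r x‖ ^ 2) (Set.Ioo 0 1))
    (hd : IntegrableOn (fun x : ℝ => ‖deriv (deriv r) x‖ ^ 2) (Set.Ioo 0 1)) :
    ((fun x : ℝ => r x) =o[𝓝[>] 0] fun x : ℝ => x ^ ((3 : ℝ) / 2)) ∧
    ((fun x : ℝ => deriv r x) =o[𝓝[>] 0] fun x : ℝ => x ^ ((1 : ℝ) / 2)) := by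
  classical
  set g := deriv (deriv r) with hg_def
  have hg_meas : AEStronglyMeasurable g (volume.restrict (Set.Ioo (0:ℝ) 1)) :=
    hd3.aestronglyMeasurable measurableSet_Ioo
  haveI : IsFiniteMeasure (volume.restrict (Set.Ioo (0:ℝ) 1)) :=
    ⟨by simp [Measure.restrict_apply_univ]⟩
  have hgL2 : MemLp g 2 (volume.restrict (Set.Ioo (0:ℝ) 1)) :=
    (memLp_two_iff_integrable_sq_norm hg_meas).2 hd
  have hg_int : IntegrableOn g (Set.Ioo 0 1) := hgL2.integrable one_le_two
  set b : ℝ := 1/2 with hb_def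
  have hb0 : (0:ℝ) < b := by norm_num
  have hb1 : b < 1 := by norm_num
  have hg_ii : ∀ x y : ℝ, 0 ≤ x → x ≤ y → y < 1 → IntervalIntegrable g volume x y := by
    intro x y hx hxy hy1
    rw [intervalIntegrable_iff_integrableOn_Ioc_of_le hxy]
    exact hg_int.mono_set (fun t ht => ⟨lt_of_le_of_lt hx ht.1, lt_of_le_of_lt ht.2 hy1⟩)
  set G : ℝ → ℂ := fun x => ∫ t in (0:ℝ)..x, g t with hG_def
  have hftc1 : ∀ x y : ℝ, 0 < x → x ≤ y → y < 1 →
      (∫ t in x..y, g t) = deriv r y - deriv r x := by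
    intro x y hx hxy hy1
    refine intervalIntegral.integral_eq_sub_of_hasDerivAt (fun t ht => ?_)
      (hg_ii x y hx.le hxy hy1)
    rw [Set.uIcc_of_le hxy] at ht
    exact (hd2 t ⟨lt_of_lt_of_le hx ht.1, lt_of_le_of_lt ht.2 hy1⟩).hasDerivAt
  set C : ℂ := deriv r b - G b with hC_def
  have hderiv_eq : ∀ x : ℝ, 0 < x → x ≤ b → deriv r x = C + G x := by
    intro x hx hxb
    have h1 := hftc1 x b hx hxb hb1
    have h2 : G x + ∫ t in x..b, g t = G b :=
      intervalIntegral.integral_add_adjacent_intervals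
        (hg_ii 0 x le_rfl hx.le (lt_of_le_of_lt hxb hb1)) (hg_ii x b hx.le hxb hb1)
    rw [hC_def]
    linear_combination h1 - h2
  have hdr_cont : ContinuousOn (deriv r) (Set.Ioo (0:ℝ) 1) :=
    fun t ht => ((hd2 t ht).continuousAt).continuousWithinAt
  have hdr_ii : ∀ x y : ℝ, 0 < x → x ≤ y → y < 1 →
      IntervalIntegrable (deriv r) volume x y := by
    intro x y hx hxy hy1
    apply (hdr_cont.mono _).intervalIntegrable
    rw [Set.uIcc_of_le hxy]
    exact fun t ht => ⟨lt_of_lt_of_le hx ht.1, lt_of_le_of_lt ht.2 hy1⟩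
  have hftc0 : ∀ x y : ℝ, 0 < x → x ≤ y → y < 1 →
      (∫ t in x..y, deriv r t) = r y - r x := by
    intro x y hx hxy hy1
    refine intervalIntegral.integral_eq_sub_of_hasDerivAt (fun t ht => ?_)
      (hdr_ii x y hx hxy hy1)
    rw [Set.uIcc_of_le hxy] at ht
    exact (hd1 t ⟨lt_of_lt_of_le hx ht.1, lt_of_le_of_lt ht.2 hy1⟩).hasDerivAt
  have hG_cont : ContinuousOn G (Set.Icc 0 b) := by
    have h := intervalIntegral.continuousOn_primitive_interval'
      (hg_ii 0 b le_rfl hb0.le hb1) Set.left_mem_uIcc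
    rwa [Set.uIcc_of_le hb0.le] at h
  have hG_ii : ∀ x y : ℝ, 0 ≤ x → x ≤ y → y ≤ b → IntervalIntegrable G volume x y := by
    intro x y hx hxy hyb
    apply (hG_cont.mono _).intervalIntegrable
    rw [Set.uIcc_of_le hxy]
    exact fun t ht => ⟨le_trans hx ht.1, le_trans ht.2 hyb⟩
  set H : ℝ → ℂ := fun x => ∫ t in (0:ℝ)..x, G t with hH_def
  set D : ℂ := r b - C * (b:ℂ) - H b with hD_def
  have hr_eq : ∀ x : ℝ, 0 < x → x ≤ b → r x = D + C * (x:ℂ) + H x := by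
    intro x hx hxb
    have h1 : (∫ t in x..b, deriv r t) = r b - r x := hftc0 x b hx hxb hb1
    have h2 : (∫ t in x..b, deriv r t) = ∫ t in x..b, (C + G t) := by
      apply intervalIntegral.integral_congr
      intro t ht
      rw [Set.uIcc_of_le hxb] at ht
      exact hderiv_eq t (lt_of_lt_of_le hx ht.1) ht.2
    have h3 : (∫ t in x..b, (C + G t)) = (b - x) • C + ∫ t in x..b, G t := by
      rw [intervalIntegral.integral_add intervalIntegrable_const (hG_ii x b hx.le hxb le_rfl),
        intervalIntegral.integral_const]
    have h4 : H x + ∫ t in x..b, G t = H b :=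
      intervalIntegral.integral_add_adjacent_intervals
        (hG_ii 0 x le_rfl hx.le hxb) (hG_ii x b hx.le hxb le_rfl)
    have h5 : r b - r x = ((b:ℂ) - (x:ℂ)) * C + (H b - H x) := by
      rw [← h1, h2, h3, Complex.real_smul]
      push_cast
      linear_combination h4
    rw [hD_def]
    linear_combination -h5
  set E : ℝ → ℝ := fun x => ∫ t in Set.Ioo 0 x, ‖g t‖^2 with hE_def
  have hE_nonneg : ∀ x, 0 ≤ E x :=
    fun x => setIntegral_nonneg measurableSet_Ioo (fun t _ => sq_nonneg _)
  have hE_int : ∀ x : ℝ, x ≤ 1 → IntegrableOn (fun t => ‖g t‖^2) (Set.Ioo 0 x) :=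
    fun x hx => hd.mono_set (Set.Ioo_subset_Ioo le_rfl hx)
  have hE_mono : ∀ x y : ℝ, x ≤ y → y ≤ 1 → E x ≤ E y := by
    intro x y hxy hy1
    exact setIntegral_mono_set (hE_int y hy1)
      (Eventually.of_forall fun t => sq_nonneg _)
      (HasSubset.Subset.eventuallyLE (Set.Ioo_subset_Ioo le_rfl hxy))
  have hE_tendsto : Tendsto E (𝓝[>] (0:ℝ)) (𝓝 0) := by
    have hint : IntegrableOn (fun t => ‖g t‖^2) (Set.Icc 0 b) := by
      rw [integrableOn_Icc_iff_integrableOn_Ioo]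
      exact hE_int b hb1.le
    have hcont := intervalIntegral.continuousOn_primitive (a := 0) (b := b)
      (f := fun t => ‖g t‖^2) (μ := volume) hint
    have h0 := (hcont 0 ⟨le_rfl, hb0.le⟩).tendsto
    have h0' : Tendsto (fun x => ∫ t in Set.Ioc 0 x, ‖g t‖^2) (𝓝[Set.Icc 0 b] 0) (𝓝 0) := by
      simpa using h0
    have heq : 𝓝[>] (0:ℝ) = 𝓝[Set.Ioc 0 b] 0 := (nhdsWithin_Ioc_eq_nhdsGT hb0).symm
    have h1 : Tendsto (fun x => ∫ t in Set.Ioc 0 x, ‖g t‖^2) (𝓝[>] (0:ℝ)) (𝓝 0) := by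
      rw [heq]
      exact h0'.mono_left (nhdsWithin_mono 0 Set.Ioc_subset_Icc_self)
    refine h1.congr (fun x => ?_)
    exact integral_Ioc_eq_integral_Ioo
  have hG_bound : ∀ x : ℝ, 0 < x → x ≤ b → ‖G x‖ ≤ E x ^ ((1:ℝ)/2) * x ^ ((1:ℝ)/2) := by
    intro x hx hxb
    have hx1 : x < 1 := lt_of_le_of_lt hxb hb1
    have hsub : Set.Ioo (0:ℝ) x ⊆ Set.Ioo (0:ℝ) 1 := Set.Ioo_subset_Ioo le_rfl hx1.le
    have hGx : G x = ∫ t in Set.Ioo 0 x, g t := by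
      rw [hG_def]
      simp only
      rw [intervalIntegral.integral_of_le hx.le, integral_Ioc_eq_integral_Ioo]
    rw [hGx]
    calc ‖∫ t in Set.Ioo 0 x, g t‖
        ≤ (∫ t in Set.Ioo 0 x, ‖g t‖^2) ^ ((1:ℝ)/2) * (volume (Set.Ioo 0 x)).toReal ^ ((1:ℝ)/2) :=
          cs_helper ((hg_int.mono_set hsub).aestronglyMeasurable)
            (measure_Ioo_lt_top) (hd.mono_set hsub)
      _ = E x ^ ((1:ℝ)/2) * x ^ ((1:ℝ)/2) := by
          rw [Real.volume_Ioo, sub_zero, ENNReal.toReal_ofReal hx.le]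
  have hH_bound : ∀ x : ℝ, 0 < x → x ≤ b → ‖H x‖ ≤ E x ^ ((1:ℝ)/2) * x ^ ((3:ℝ)/2) := by
    intro x hx hxb
    have hx1 : x < 1 := lt_of_le_of_lt hxb hb1
    have hbound_ii : IntervalIntegrable (fun t : ℝ => E x ^ ((1:ℝ)/2) * t ^ ((1:ℝ)/2))
        volume 0 x :=
      (intervalIntegral.intervalIntegrable_rpow' (by norm_num)).const_mul _
    have hle : ∀ᵐ t ∂(volume.restrict (Set.uIoc 0 x)),
        ‖G t‖ ≤ E x ^ ((1:ℝ)/2) * t ^ ((1:ℝ)/2) := by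
      rw [Set.uIoc_of_le hx.le, ae_restrict_iff' measurableSet_Ioc]
      refine Eventually.of_forall (fun t ht => ?_)
      calc ‖G t‖ ≤ E t ^ ((1:ℝ)/2) * t ^ ((1:ℝ)/2) := hG_bound t ht.1 (le_trans ht.2 hxb)
        _ ≤ E x ^ ((1:ℝ)/2) * t ^ ((1:ℝ)/2) := by
            apply mul_le_mul_of_nonneg_right _ (Real.rpow_nonneg ht.1.le _)
            exact Real.rpow_le_rpow (hE_nonneg t) (hE_mono t x ht.2 hx1.le) (by norm_num)
    have h1 : ‖H x‖ ≤ |∫ t in (0:ℝ)..x, E x ^ ((1:ℝ)/2) * t ^ ((1:ℝ)/2)| :=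
      intervalIntegral.norm_integral_le_abs_of_norm_le hle hbound_ii
    have h2 : (∫ t in (0:ℝ)..x, E x ^ ((1:ℝ)/2) * t ^ ((1:ℝ)/2))
        = E x ^ ((1:ℝ)/2) * (x ^ ((3:ℝ)/2) / (3/2)) := by
      rw [intervalIntegral.integral_const_mul, integral_rpow (Or.inl (by norm_num))]
      rw [Real.zero_rpow (by norm_num)]
      norm_num
    have h3 : E x ^ ((1:ℝ)/2) * (x ^ ((3:ℝ)/2) / (3/2)) ≤ E x ^ ((1:ℝ)/2) * x ^ ((3:ℝ)/2) := by
      apply mul_le_mul_of_nonneg_left _ (Real.rpow_nonneg (hE_nonneg x) _)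
      have hx32 : (0:ℝ) ≤ x ^ ((3:ℝ)/2) := Real.rpow_nonneg hx.le _
      linarith
    calc ‖H x‖ ≤ |∫ t in (0:ℝ)..x, E x ^ ((1:ℝ)/2) * t ^ ((1:ℝ)/2)| := h1
      _ = E x ^ ((1:ℝ)/2) * (x ^ ((3:ℝ)/2) / (3/2)) := by
          rw [h2, abs_of_nonneg]
          positivity
      _ ≤ E x ^ ((1:ℝ)/2) * x ^ ((3:ℝ)/2) := h3
  have hnormC : ∀ x : ℝ, 0 ≤ x → ‖C * (x:ℂ)‖ = ‖C‖ * x := by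
    intro x hx
    rw [norm_mul, Complex.norm_real, Real.norm_of_nonneg hx]
  have hEbmono : ∀ x : ℝ, 0 < x → x ≤ b →
      E x ^ ((1:ℝ)/2) ≤ E b ^ ((1:ℝ)/2) :=
    fun x hx hxb => Real.rpow_le_rpow (hE_nonneg x) (hE_mono x b hxb hb1.le) (by norm_num)
  have hHb2 : ∀ x : ℝ, 0 < x → x ≤ b → ‖H x‖ ≤ E b ^ ((1:ℝ)/2) * x ^ ((3:ℝ)/2) := by
    intro x hx hxb
    exact (hH_bound x hx hxb).trans
      (mul_le_mul_of_nonneg_right (hEbmono x hx hxb) (Real.rpow_nonneg hx.le _))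
  have hD0 : D = 0 := by
    by_contra hD
    have hDpos : 0 < ‖D‖ := norm_pos_iff.2 hD
    have ht1 : Tendsto (fun x : ℝ => ‖C‖ * x + E b ^ ((1:ℝ)/2) * x ^ ((3:ℝ)/2))
        (𝓝[>] (0:ℝ)) (𝓝 0) := by
      have t1 : Tendsto (fun x : ℝ => ‖C‖ * x) (𝓝 (0:ℝ)) (𝓝 (‖C‖ * 0)) :=
        (continuous_const.mul continuous_id).tendsto (0:ℝ)
      have t2 : Tendsto (fun x : ℝ => x ^ ((3:ℝ)/2)) (𝓝 (0:ℝ)) (𝓝 0) := by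
        have h := (Real.continuousAt_rpow_const 0 ((3:ℝ)/2) (Or.inr (by norm_num))).tendsto
        simpa [Real.zero_rpow (by norm_num : ((3:ℝ)/2) ≠ 0)] using h
      have := t1.add (t2.const_mul (E b ^ ((1:ℝ)/2)))
      simp only [mul_zero, add_zero, mul_comm] at this
      have h0 : (‖C‖ * 0 + E b ^ ((1:ℝ)/2) * 0 : ℝ) = 0 := by ring
      simpa [h0, mul_comm] using this.mono_left nhdsWithin_le_nhds
    have hev : ∀ᶠ x in 𝓝[>] (0:ℝ), x ∈ Set.Ioo (0:ℝ) b ∧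
        ‖C‖ * x + E b ^ ((1:ℝ)/2) * x ^ ((3:ℝ)/2) < ‖D‖/2 :=
      (eventually_of_mem (Ioo_mem_nhdsGT hb0) (fun x hx => hx)).and
        (ht1.eventually_lt_const (by positivity))
    rcases mem_nhdsGT_iff_exists_Ioo_subset.1 hev with ⟨δ, hδmem, hδsub⟩
    have hδ0 : 0 < δ := hδmem
    refine not_integrable_aux hδ0 (by norm_num : (-3:ℝ) ≤ -1)
      (show (0:ℝ) < (‖D‖/2)^2 by positivity)
      (hw.mono_set (fun t ht => Set.Ioo_subset_Ioo le_rfl hb1.le (hδsub ht).1))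
      ?_
    intro x hx
    obtain ⟨hxmem, hxsmall⟩ := hδsub hx
    have hx0 : 0 < x := hxmem.1
    have hxb : x ≤ b := hxmem.2.le
    have hx1 : x ≤ 1 := hxb.trans hb1.le
    have hrD : D = r x - (C * (x:ℂ) + H x) := by
      rw [hr_eq x hx0 hxb]; ring
    have h6 : ‖D‖ ≤ ‖r x‖ + (‖C‖ * x + ‖H x‖) := by
      rw [hrD]
      refine (norm_sub_le _ _).trans ?_
      gcongr
      refine (norm_add_le _ _).trans ?_
      rw [hnormC x hx0.le]
    have h7 : ‖D‖/2 ≤ ‖r x‖ := by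
      have hH := hHb2 x hx0 hxb
      linarith
    have hpow : x ^ (-3:ℝ) ≤ x ^ (-(3+α)) :=
      Real.rpow_le_rpow_of_exponent_ge hx0 hx1 (by linarith)
    have hsq : (‖D‖/2)^2 ≤ ‖r x‖^2 := by
      apply pow_le_pow_left₀ (by positivity) h7
    calc (‖D‖/2)^2 * x ^ (-3:ℝ) = x ^ (-3:ℝ) * (‖D‖/2)^2 := by ring
      _ ≤ x ^ (-(3+α)) * ‖r x‖^2 :=
          mul_le_mul hpow hsq (by positivity) (Real.rpow_nonneg hx0.le _)
  have hC0 : C = 0 := by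
    by_contra hC
    have hCpos : 0 < ‖C‖ := norm_pos_iff.2 hC
    have ht1 : Tendsto (fun x : ℝ => E b ^ ((1:ℝ)/2) * x ^ ((1:ℝ)/2))
        (𝓝[>] (0:ℝ)) (𝓝 0) := by
      have t2 : Tendsto (fun x : ℝ => x ^ ((1:ℝ)/2)) (𝓝 (0:ℝ)) (𝓝 0) := by
        have h := (Real.continuousAt_rpow_const 0 ((1:ℝ)/2) (Or.inr (by norm_num))).tendsto
        simpa [Real.zero_rpow (by norm_num : ((1:ℝ)/2) ≠ 0)] using h
      have := t2.const_mul (E b ^ ((1:ℝ)/2))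
      simpa [mul_comm] using this.mono_left nhdsWithin_le_nhds
    have hev : ∀ᶠ x in 𝓝[>] (0:ℝ), x ∈ Set.Ioo (0:ℝ) b ∧
        E b ^ ((1:ℝ)/2) * x ^ ((1:ℝ)/2) < ‖C‖/2 :=
      (eventually_of_mem (Ioo_mem_nhdsGT hb0) (fun x hx => hx)).and
        (ht1.eventually_lt_const (by positivity))
    rcases mem_nhdsGT_iff_exists_Ioo_subset.1 hev with ⟨δ, hδmem, hδsub⟩
    have hδ0 : 0 < δ := hδmem
    refine not_integrable_aux hδ0 (le_refl (-1:ℝ))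
      (show (0:ℝ) < (‖C‖/2)^2 by positivity)
      (hw.mono_set (fun t ht => Set.Ioo_subset_Ioo le_rfl hb1.le (hδsub ht).1))
      ?_
    intro x hx
    obtain ⟨hxmem, hxsmall⟩ := hδsub hx
    have hx0 : 0 < x := hxmem.1
    have hxb : x ≤ b := hxmem.2.le
    have hx1 : x ≤ 1 := hxb.trans hb1.le
    have hrC : C * (x:ℂ) = r x - H x := by
      rw [hr_eq x hx0 hxb, hD0]; ring
    have hHsmall : ‖H x‖ ≤ (‖C‖/2) * x := by
      have h1 : ‖H x‖ ≤ E b ^ ((1:ℝ)/2) * x ^ ((3:ℝ)/2) := hHb2 x hx0 hxb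
      have h2 : x ^ ((3:ℝ)/2) = x ^ ((1:ℝ)/2) * x := by
        rw [show (3:ℝ)/2 = 1/2 + 1 by norm_num, Real.rpow_add hx0, Real.rpow_one]
      calc ‖H x‖ ≤ E b ^ ((1:ℝ)/2) * x ^ ((3:ℝ)/2) := h1
        _ = (E b ^ ((1:ℝ)/2) * x ^ ((1:ℝ)/2)) * x := by rw [h2]; ring
        _ ≤ (‖C‖/2) * x := mul_le_mul_of_nonneg_right hxsmall.le hx0.le
    have h6 : ‖C‖ * x ≤ ‖r x‖ + ‖H x‖ := by
      rw [← hnormC x hx0.le, hrC]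
      exact norm_sub_le _ _
    have h7 : (‖C‖/2) * x ≤ ‖r x‖ := by linarith
    have hpow : x ^ (-3:ℝ) ≤ x ^ (-(3+α)) :=
      Real.rpow_le_rpow_of_exponent_ge hx0 hx1 (by linarith)
    have hsq : ((‖C‖/2) * x)^2 ≤ ‖r x‖^2 := by
      apply pow_le_pow_left₀ (by positivity) h7
    have ex : x ^ (-3:ℝ) * x ^ (2:ℕ) = x ^ (-1:ℝ) := by
      rw [← Real.rpow_natCast x 2, ← Real.rpow_add hx0]; norm_num
    calc (‖C‖/2)^2 * x ^ (-1:ℝ) = x ^ (-3:ℝ) * ((‖C‖/2) * x)^2 := by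
          rw [← ex]; ring
      _ ≤ x ^ (-(3+α)) * ‖r x‖^2 :=
          mul_le_mul hpow hsq (by positivity) (Real.rpow_nonneg hx0.le _)
  have hEhalf : Tendsto (fun x => E x ^ ((1:ℝ)/2)) (𝓝[>] (0:ℝ)) (𝓝 0) := by
    have hcont := (Real.continuousAt_rpow_const 0 ((1:ℝ)/2) (Or.inr (by norm_num))).tendsto
    have h := hcont.comp hE_tendsto
    simpa [Function.comp_def, Real.zero_rpow (by norm_num : ((1:ℝ)/2) ≠ 0)] using h
  have hev1 : ∀ᶠ x in 𝓝[>] (0:ℝ), x ∈ Set.Ioo (0:ℝ) b :=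
    eventually_of_mem (Ioo_mem_nhdsGT hb0) (fun x hx => hx)
  constructor
  · rw [isLittleO_iff]
    intro c hc
    have hev2 : ∀ᶠ x in 𝓝[>] (0:ℝ), E x ^ ((1:ℝ)/2) ≤ c := hEhalf.eventually_le_const hc
    filter_upwards [hev1, hev2] with x hx1 hx2
    have hrx : r x = H x := by rw [hr_eq x hx1.1 hx1.2.le, hD0, hC0]; ring
    rw [hrx, Real.norm_of_nonneg (Real.rpow_nonneg hx1.1.le _)]
    calc ‖H x‖ ≤ E x ^ ((1:ℝ)/2) * x ^ ((3:ℝ)/2) := hH_bound x hx1.1 hx1.2.le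
      _ ≤ c * x ^ ((3:ℝ)/2) :=
          mul_le_mul_of_nonneg_right hx2 (Real.rpow_nonneg hx1.1.le _)
  · rw [isLittleO_iff]
    intro c hc
    have hev2 : ∀ᶠ x in 𝓝[>] (0:ℝ), E x ^ ((1:ℝ)/2) ≤ c := hEhalf.eventually_le_const hc
    filter_upwards [hev1, hev2] with x hx1 hx2
    have hrx : deriv r x = G x := by rw [hderiv_eq x hx1.1 hx1.2.le, hC0]; ring
    rw [hrx, Real.norm_of_nonneg (Real.rpow_nonneg hx1.1.le _)]
    calc ‖G x‖ ≤ E x ^ ((1:ℝ)/2) * x ^ ((1:ℝ)/2) := hG_bound x hx1.1 hx1.2.le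
      _ ≤ c * x ^ ((1:ℝ)/2) :=
          mul_le_mul_of_nonneg_right hx2 (Real.rpow_nonneg hx1.1.le _)
end
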